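/- arXiv:1711.06511 — 3 statements merged into one kernel-verified Lean document; each statement's English description precedes it below -/
import Mathlib

section
/- (Foata–Schützenberger.) For each n ≥ 1 there exist nonnegative integers γ_{n,j}, for 0 ≤ j ≤ ⌊(n−1)/2⌋, such that the Eulerian polynomial A_n(q) = Σ_{π ∈ S_n} q^{des(π)} satisfies A_n(q) = Σ_{j=0}^{⌊(n−1)/2⌋} γ_{n,j} q^j (1+q)^{n−1−2j}. -/
/-- The number of descents of a permutation of `Fin n`. -/
def des {n : ℕ} (π : Equiv.Perm (Fin n)) : ℕ :=
  (Finset.univ.filter (fun p : Fin n × Fin n =>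
    (p.2 : ℕ) = (p.1 : ℕ) + 1 ∧ π p.2 < π p.1)).card

open Polynomial

open List in
/-- The number of descents of a word. -/
def ldes : List ℕ → ℕ
  | [] => 0
  | [_] => 0
  | a :: b :: t => (if b < a then 1 else 0) + ldes (b :: t)

lemma ldes_cons_cons (a b : ℕ) (t : List ℕ) :
    ldes (a :: b :: t) = (if b < a then 1 else 0) + ldes (b :: t) := rfl

open List in
/-- Key insertion lemma: inserting a maximal letter into a word in all possible
positions, `ldes w + 1` insertions keep the number of descents and the other
`|w| - ldes w` insertions increase it by one. -/
lemma sum_insertions (a : ℕ) : ∀ (w : List ℕ), (∀ x ∈ w, x < a) →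
    ((permutations'Aux a w).map (fun u => (X : Polynomial ℤ) ^ ldes u)).sum
      = ((ldes w : Polynomial ℤ) + 1) * X ^ ldes w
        + ((w.length : Polynomial ℤ) - (ldes w : Polynomial ℤ)) * X ^ (ldes w + 1)
  | [], _ => by simp [ldes]
  | [b], h => by
    have hb : b < a := h b (by simp)
    simp [ldes, permutations'Aux, if_neg (Nat.lt_asymm hb), if_pos hb]
    ring
  | b :: c :: t, h => by
    have hb : b < a := h b (by simp)
    have hc : c < a := h c (by simp)
    have ih := sum_insertions a (c :: t) (fun x hx => h x (by simp [hx]))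
    rw [show permutations'Aux a (b :: c :: t)
        = (a :: b :: c :: t) :: ((permutations'Aux a (c :: t)).map (b :: ·)) from rfl]
    rw [show permutations'Aux a (c :: t) = (a :: c :: t) :: ((permutations'Aux a t).map (c :: ·)) from rfl] at ih ⊢
    simp only [List.map_cons, List.sum_cons, List.map_map] at ih ⊢
    have hac : ldes (a :: c :: t) = 1 + ldes (c :: t) := by rw [ldes_cons_cons, if_pos hc]
    have hbac : ldes (b :: a :: c :: t) = ldes (a :: c :: t) := by
      rw [ldes_cons_cons, if_neg (Nat.lt_asymm hb), zero_add]
    have habc : ldes (a :: b :: c :: t) = 1 + ldes (b :: c :: t) := by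
      rw [ldes_cons_cons, if_pos hb]
    have hmap : List.map ((fun u => (X : Polynomial ℤ) ^ ldes u) ∘ (fun x => b :: x) ∘ fun x => c :: x)
          (permutations'Aux a t)
        = List.map (fun u => (X : Polynomial ℤ) ^ (if c < b then 1 else 0)
            * (((fun u => (X : Polynomial ℤ) ^ ldes u) ∘ fun x => c :: x) u)) (permutations'Aux a t) := by
      refine List.map_congr_left (fun u _ => ?_)
      simp only [Function.comp_apply, ldes_cons_cons (a := b)]
      rw [pow_add]
    rw [hmap, List.sum_map_mul_left]
    have hrest : (List.map ((fun u => (X : Polynomial ℤ) ^ ldes u) ∘ fun x => c :: x) (permutations'Aux a t)).sum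
        = ((ldes (c :: t) : Polynomial ℤ) + 1) * X ^ ldes (c :: t)
          + (((c :: t).length : Polynomial ℤ) - ((ldes (c :: t) : Polynomial ℤ))) * X ^ (ldes (c :: t) + 1)
          - X ^ ldes (a :: c :: t) := by
      rw [eq_sub_iff_add_eq, add_comm, ih]
    rw [hrest, habc, hbac, hac, ldes_cons_cons b c t]
    simp only [List.length_cons]
    by_cases hcb : c < b
    · rw [if_pos hcb]
      push_cast
      ring
    · rw [if_neg hcb]
      push_cast
      ring

open List in
/-- The Eulerian-type generating polynomial of all rearrangements of `L`. -/
noncomputable def FF (L : List ℕ) : Polynomial ℤ :=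
  (L.permutations'.map (fun w => (X : Polynomial ℤ) ^ ldes w)).sum

lemma term_eq (d n : ℕ) :
    ((d : Polynomial ℤ) + 1) * X ^ d + ((n : Polynomial ℤ) - (d : Polynomial ℤ)) * X ^ (d + 1)
    = (1 + (n : Polynomial ℤ) * X) * X ^ d + X * (1 - X) * derivative ((X : Polynomial ℤ) ^ d) := by
  cases d with
  | zero => simp
  | succ d =>
    rw [derivative_X_pow]
    simp only [Nat.cast_add, Nat.cast_one, Nat.add_sub_cancel, map_add, map_one,
      Polynomial.C_eq_natCast]
    ring

lemma sum_comb (l : List (List ℕ)) (A B : Polynomial ℤ) (g : List ℕ → Polynomial ℤ) :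
    (l.map (fun w => A * g w + B * derivative (g w))).sum
      = A * (l.map g).sum + B * derivative ((l.map g).sum) := by
  induction l with
  | nil => simp
  | cons w l ih => simp only [List.map_cons, List.sum_cons, ih, derivative_add]; ring

open List in
lemma FF_cons (a : ℕ) (L : List ℕ) (h : ∀ x ∈ L, x < a) :
    FF (a :: L) = (1 + (L.length : Polynomial ℤ) * X) * FF L
      + X * (1 - X) * derivative (FF L) := by
  have key : ∀ w ∈ L.permutations',
      ((permutations'Aux a w).map (fun u => (X : Polynomial ℤ) ^ ldes u)).sum
        = (1 + (L.length : Polynomial ℤ) * X) * X ^ ldes w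
          + X * (1 - X) * derivative ((X : Polynomial ℤ) ^ ldes w) := by
    intro w hw
    have hwl : w ~ L := (mem_permutations').mp hw
    have hlen : w.length = L.length := hwl.length_eq
    rw [sum_insertions a w (fun x hx => h x (hwl.mem_iff.mp hx)), hlen, term_eq]
  rw [FF, show (a :: L).permutations' = L.permutations'.flatMap (permutations'Aux a) from rfl]
  rw [List.map_flatMap]
  rw [show (L.permutations'.flatMap fun w => List.map (fun u => (X : Polynomial ℤ) ^ ldes u) (permutations'Aux a w))
      = (L.permutations'.map fun w => List.map (fun u => (X : Polynomial ℤ) ^ ldes u) (permutations'Aux a w)).flatten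
    from (List.flatMap_def)]
  rw [List.sum_flatten, List.map_map]
  simp only [Function.comp_def]
  rw [List.map_congr_left (fun w hw => key w hw)]
  exact sum_comb _ _ _ _

open List in
lemma ldes_eq_sum : ∀ (w : List ℕ),
    ldes w = ∑ i ∈ Finset.range (w.length - 1),
      (if w.getD (i+1) 0 < w.getD i 0 then 1 else 0)
  | [] => by simp [ldes]
  | [b] => by simp [ldes]
  | b :: c :: t => by
    rw [ldes_cons_cons]
    have ih := ldes_eq_sum (c :: t)
    simp only [List.length_cons]
    rw [show t.length + 1 + 1 - 1 = (t.length + 1 - 1) + 1 by omega, Finset.sum_range_succ']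
    simp only [List.getD_cons_succ, List.getD_cons_zero]
    rw [ih] at *
    simp only [List.length_cons, List.getD_cons_succ]
    omega

open List in
lemma des_eq_ldes {n : ℕ} (π : Equiv.Perm (Fin n)) :
    des π = ldes (List.ofFn (fun i => ((π i : Fin n) : ℕ))) := by
  classical
  set w := List.ofFn (fun i => ((π i : Fin n) : ℕ)) with hw
  have hlen : w.length = n := by simp [hw]
  rw [ldes_eq_sum, hlen, des, Finset.card_filter]
  rw [Fintype.sum_prod_type]
  have inner : ∀ p1 : Fin n,
      (∑ p2 : Fin n, if ((p2 : ℕ) = (p1 : ℕ) + 1 ∧ π p2 < π p1) then 1 else 0)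
      = if h : (p1 : ℕ) + 1 < n then (if π ⟨(p1:ℕ)+1, h⟩ < π p1 then 1 else 0) else 0 := by
    intro p1
    by_cases h : (p1 : ℕ) + 1 < n
    · rw [dif_pos h]
      rw [Finset.sum_eq_single (⟨(p1:ℕ)+1, h⟩ : Fin n)]
      · simp
      · intro b _ hb
        rw [if_neg]
        rintro ⟨hb1, -⟩
        exact hb (Fin.ext hb1)
      · simp
    · rw [dif_neg h]
      apply Finset.sum_eq_zero
      intro p2 _
      rw [if_neg]
      rintro ⟨hb1, -⟩
      exact h (hb1 ▸ p2.isLt)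
  rw [Finset.sum_congr rfl (fun p1 _ => inner p1)]
  have hgetD : ∀ (i : ℕ) (h : i < n), w.getD i 0 = ((π ⟨i, h⟩ : Fin n) : ℕ) := by
    intro i h
    rw [List.getD_eq_getElem w 0 (by omega : i < w.length)]
    simp [hw]
  have step1 : ∀ p1 : Fin n,
      (if h : (p1:ℕ) + 1 < n then (if π ⟨(p1:ℕ)+1, h⟩ < π p1 then 1 else 0) else 0)
      = (fun i => if h : i + 1 < n then (if w.getD (i+1) 0 < w.getD i 0 then (1:ℕ) else 0) else 0) (p1 : ℕ) := by
    intro p1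
    show _ = if h : (p1:ℕ) + 1 < n then (if w.getD ((p1:ℕ)+1) 0 < w.getD (p1:ℕ) 0 then (1:ℕ) else 0) else 0
    by_cases h : (p1:ℕ) + 1 < n
    · rw [dif_pos h, dif_pos h, hgetD _ h, hgetD _ p1.isLt]
      exact if_congr Fin.lt_def rfl rfl
    · rw [dif_neg h, dif_neg h]
  rw [Finset.sum_congr rfl (fun p1 _ => step1 p1)]
  rw [Fin.sum_univ_eq_sum_range (fun i =>
    (if h : i + 1 < n then (if w.getD (i+1) 0 < w.getD i 0 then (1:ℕ) else 0) else 0)) n]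
  rw [← Finset.sum_subset (Finset.range_subset_range.mpr (Nat.sub_le n 1))]
  · refine Finset.sum_congr rfl (fun i hi => ?_)
    rw [Finset.mem_range] at hi
    rw [dif_pos (by omega : i + 1 < n)]
  · intro i hi hni
    rw [Finset.mem_range] at hi hni
    rw [dif_neg (by omega)]

open List in
lemma perm_range_of {n : ℕ} (w : List ℕ) (hnd : w.Nodup) (hlen : w.length = n)
    (hlt : ∀ x ∈ w, x < n) : w ~ List.range n := by
  apply List.perm_of_nodup_nodup_toFinset_eq hnd (List.nodup_range : (List.range n).Nodup)
  have hsub : w.toFinset ⊆ (List.range n).toFinset := by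
    intro x hx
    simp only [List.mem_toFinset, List.mem_range] at *
    exact hlt x hx
  apply Finset.eq_of_subset_of_card_le hsub
  rw [List.toFinset_card_of_nodup hnd, List.toFinset_card_of_nodup (List.nodup_range : (List.range n).Nodup),
    List.length_range, hlen]

open List in
noncomputable def permOf {n : ℕ} (w : List ℕ) (h : w ~ List.range n) : Equiv.Perm (Fin n) :=
  Equiv.ofBijective
    (fun i => (⟨w[(i : ℕ)]'(by rw [h.length_eq, List.length_range]; exact i.isLt), by
      have hmem : w[(i : ℕ)]'(by rw [h.length_eq, List.length_range]; exact i.isLt) ∈ w :=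
        List.getElem_mem _
      exact List.mem_range.mp (h.mem_iff.mp hmem)⟩ : Fin n))
    (by
      apply Finite.injective_iff_bijective.mp
      intro i j hij
      have hlen : w.length = n := by rw [h.length_eq, List.length_range]
      have hinj := List.nodup_iff_injective_get.mp (h.nodup_iff.mpr (List.nodup_range : (List.range n).Nodup))
      have : w.get ⟨(i : ℕ), by omega⟩ = w.get ⟨(j : ℕ), by omega⟩ := by
        simpa [List.get_eq_getElem] using congrArg Fin.val hij
      have := hinj this
      exact Fin.ext (by simpa using congrArg Fin.val this))

open List in
@[simp] lemma permOf_apply {n : ℕ} (w : List ℕ) (h : w ~ List.range n) (i : Fin n) :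
    ((permOf w h i : Fin n) : ℕ) = w[(i : ℕ)]'(by rw [h.length_eq, List.length_range]; exact i.isLt) := by
  simp [permOf, Equiv.ofBijective]

open List in
lemma sum_perm_eq_FF (n : ℕ) :
    (∑ π : Equiv.Perm (Fin n), (X : Polynomial ℤ) ^ des π)
      = FF ((List.range n).reverse) := by
  classical
  have hndbase : ((List.range n).reverse).Nodup := List.nodup_reverse.mpr (List.nodup_range : (List.range n).Nodup)
  have hnd : ((List.range n).reverse).permutations'.Nodup := by
    have h1 := List.nodup_permutations ((List.range n).reverse) hndbase
    exact ((List.permutations_perm_permutations' _).nodup_iff).mp h1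
  rw [FF, ← List.sum_toFinset _ hnd]
  have hmem : ∀ w : List ℕ, w ∈ ((List.range n).reverse).permutations'.toFinset ↔ w ~ List.range n := by
    intro w
    rw [List.mem_toFinset, List.mem_permutations']
    constructor
    · intro hh; exact hh.trans (List.reverse_perm _)
    · intro hh; exact hh.trans (List.reverse_perm _).symm
  have hofFn : ∀ π : Equiv.Perm (Fin n), (List.ofFn (fun i => ((π i : Fin n) : ℕ))) ~ List.range n := by
    intro π
    apply perm_range_of
    · rw [List.nodup_ofFn]
      intro i j hij
      exact π.injective (Fin.ext hij)
    · simp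
    · intro x hx
      rw [List.mem_ofFn] at hx
      obtain ⟨i, rfl⟩ := hx
      exact (π i).isLt
  refine (Finset.sum_bij' (fun π _ => List.ofFn (fun i => ((π i : Fin n) : ℕ)))
    (fun w hw => permOf w ((hmem w).mp hw)) ?_ ?_ ?_ ?_ ?_)
  · intro π _
    exact (hmem _).mpr (hofFn π)
  · intro w hw
    exact Finset.mem_univ _
  · intro π hπ
    apply Equiv.ext
    intro i
    apply Fin.ext
    rw [permOf_apply]
    simp
  · intro w hw
    have hlen : w.length = n := by rw [((hmem w).mp hw).length_eq, List.length_range]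
    apply List.ext_getElem (by simp [hlen])
    intro i h1 h2
    have hi : i < n := by simpa using h1
    rw [List.getElem_ofFn, permOf_apply]
  · intro π _
    rw [des_eq_ldes]

lemma key_term (j m : ℕ) :
    (1 + ((2*j+m+1 : ℕ) : Polynomial ℤ) * X) * (X^j * (1+X)^m)
      + X * (1-X) * derivative ((X : Polynomial ℤ)^j * (1+X)^m)
    = ((j+1 : ℕ) : Polynomial ℤ) * (X^j * (1+X)^(m+1))
      + ((2*m : ℕ) : Polynomial ℤ) * (X^(j+1) * (1+X)^(m-1)) := by
  have h1 : derivative ((1+X : Polynomial ℤ)) = 1 := by simp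
  match j, m with
  | 0, 0 => simp [derivative_X_pow]
  | 0, m+1 =>
    simp only [pow_zero, one_mul, derivative_pow, h1, Nat.add_sub_cancel,
      Polynomial.C_eq_natCast, mul_one]
    push_cast
    ring
  | j+1, 0 =>
    simp only [pow_zero, mul_one, derivative_X_pow, Nat.add_sub_cancel,
      Polynomial.C_eq_natCast]
    push_cast
    ring
  | j+1, m+1 =>
    simp only [derivative_mul, derivative_X_pow, derivative_pow, h1, Nat.add_sub_cancel,
      Polynomial.C_eq_natCast, mul_one, derivative_X]
    push_cast
    ring

lemma term_apply (n j : ℕ) (γ : ℕ → ℕ) (hj : 2*j + 1 ≤ n) :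
    (1 + (n : Polynomial ℤ) * X) * ((γ j : Polynomial ℤ) * X^j * (1+X)^(n-1-2*j))
      + X * (1-X) * derivative ((γ j : Polynomial ℤ) * X^j * (1+X)^(n-1-2*j))
    = ((γ j * (j+1) : ℕ) : Polynomial ℤ) * X^j * (1+X)^(n-2*j)
      + ((2 * γ j * (n-1-2*j) : ℕ) : Polynomial ℤ) * X^(j+1) * (1+X)^(n-2*(j+1)) := by
  set m := n - 1 - 2*j with hm
  have hn : n = 2*j + m + 1 := by omega
  have h1 : n - 2*j = m + 1 := by omega
  have h2 : n - 2*(j+1) = m - 1 := by omega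
  have hder : derivative ((γ j : Polynomial ℤ) * X^j * (1+X)^m)
      = (γ j : Polynomial ℤ) * derivative ((X : Polynomial ℤ)^j * (1+X)^m) := by
    rw [mul_assoc, ← Polynomial.C_eq_natCast, derivative_C_mul]
  rw [h1, h2, hder, mul_assoc]
  calc (1 + (n : Polynomial ℤ) * X) * ((γ j : Polynomial ℤ) * (X^j * (1+X)^m))
        + X * (1-X) * ((γ j : Polynomial ℤ) * derivative ((X : Polynomial ℤ)^j * (1+X)^m))
      = (γ j : Polynomial ℤ) * ((1 + ((2*j+m+1 : ℕ) : Polynomial ℤ) * X) * (X^j * (1+X)^m)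
          + X * (1-X) * derivative ((X : Polynomial ℤ)^j * (1+X)^m)) := by
        rw [← hn]; ring
    _ = (γ j : Polynomial ℤ) * (((j+1 : ℕ) : Polynomial ℤ) * (X^j * (1+X)^(m+1))
          + ((2*m : ℕ) : Polynomial ℤ) * (X^(j+1) * (1+X)^(m-1))) := by rw [key_term]
    _ = _ := by push_cast; ring

lemma gamma_step (n : ℕ) (hn : 1 ≤ n) (γ : ℕ → ℕ) (f : Polynomial ℤ)
    (hf : f = ∑ j ∈ Finset.range ((n-1)/2+1), (γ j : Polynomial ℤ) * X^j * (1+X)^(n-1-2*j)) :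
    ∃ γ' : ℕ → ℕ, (1 + (n : Polynomial ℤ) * X) * f + X * (1-X) * derivative f
      = ∑ j ∈ Finset.range (n/2+1), (γ' j : Polynomial ℤ) * X^j * (1+X)^(n-2*j) := by
  classical
  set K := (n-1)/2 + 1 with hK
  refine ⟨fun j => (if j < K then γ j * (j+1) else 0)
    + (if j = 0 then 0 else 2 * γ (j-1) * (n+1-2*j)), ?_⟩
  subst hf
  rw [Finset.mul_sum, map_sum, Finset.mul_sum, ← Finset.sum_add_distrib]
  have hterm : ∀ j ∈ Finset.range K,
      (1 + (n : Polynomial ℤ) * X) * ((γ j : Polynomial ℤ) * X^j * (1+X)^(n-1-2*j))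
        + X * (1-X) * derivative ((γ j : Polynomial ℤ) * X^j * (1+X)^(n-1-2*j))
      = ((γ j * (j+1) : ℕ) : Polynomial ℤ) * X^j * (1+X)^(n-2*j)
        + ((2 * γ j * (n-1-2*j) : ℕ) : Polynomial ℤ) * X^(j+1) * (1+X)^(n-2*(j+1)) := by
    intro j hj
    rw [Finset.mem_range] at hj
    exact term_apply n j γ (by omega)
  rw [Finset.sum_congr rfl hterm, Finset.sum_add_distrib]
  have hshift : (∑ j ∈ Finset.range K,
        ((2 * γ j * (n-1-2*j) : ℕ) : Polynomial ℤ) * X^(j+1) * (1+X)^(n-2*(j+1)))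
      = ∑ j ∈ Finset.range (K+1),
        ((if j = 0 then 0 else 2 * γ (j-1) * (n+1-2*j) : ℕ) : Polynomial ℤ) * X^j * (1+X)^(n-2*j) := by
    rw [Finset.sum_range_succ' (fun j => ((if j = 0 then 0 else 2 * γ (j-1) * (n+1-2*j) : ℕ) : Polynomial ℤ) * X^j * (1+X)^(n-2*j)) K]
    norm_num
    apply Finset.sum_congr rfl
    intro j hj
    have hexp : n + 1 - 2*(j+1) = n - 1 - 2*j := by omega
    rw [hexp]
  have hfirst : (∑ j ∈ Finset.range K,
        ((γ j * (j+1) : ℕ) : Polynomial ℤ) * X^j * (1+X)^(n-2*j))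
      = ∑ j ∈ Finset.range (K+1),
        ((if j < K then γ j * (j+1) else 0 : ℕ) : Polynomial ℤ) * X^j * (1+X)^(n-2*j) := by
    rw [eq_comm, Finset.sum_range_succ, if_neg (lt_irrefl K)]
    simp only [Nat.cast_zero, zero_mul, add_zero]
    refine Finset.sum_congr rfl (fun j hj => ?_)
    rw [Finset.mem_range] at hj
    rw [if_pos hj]
  rw [hshift, hfirst, ← Finset.sum_add_distrib]
  have hcomb : ∀ j ∈ Finset.range (K+1),
      ((if j < K then γ j * (j+1) else 0 : ℕ) : Polynomial ℤ) * X^j * (1+X)^(n-2*j)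
        + ((if j = 0 then 0 else 2 * γ (j-1) * (n+1-2*j) : ℕ) : Polynomial ℤ) * X^j * (1+X)^(n-2*j)
      = (((if j < K then γ j * (j+1) else 0) + (if j = 0 then 0 else 2 * γ (j-1) * (n+1-2*j)) : ℕ) : Polynomial ℤ) * X^j * (1+X)^(n-2*j) := by
    intro j _
    push_cast
    ring
  rw [Finset.sum_congr rfl hcomb]
  by_cases hpar : n % 2 = 1
  · have hKK : K = n/2 + 1 := by omega
    rw [Finset.sum_range_succ, hKK]
    have htop : ((if K < K then γ K * (K+1) else 0) + (if K = 0 then 0 else 2 * γ (K-1) * (n+1-2*K)) : ℕ) = 0 := by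
      rw [if_neg (lt_irrefl K)]
      have : n + 1 - 2*K = 0 := by omega
      rw [this]
      simp
    rw [← hKK, htop]
    simp
  · have hKK : K + 1 = n/2 + 1 := by omega
    rw [hKK]

open List in
lemma FF_gamma : ∀ (n : ℕ), 1 ≤ n →
    ∃ γ : ℕ → ℕ, FF ((List.range n).reverse)
      = ∑ j ∈ Finset.range ((n-1)/2+1), (γ j : Polynomial ℤ) * X^j * (1+X)^(n-1-2*j) := by
  intro n hn
  induction n, hn using Nat.le_induction with
  | base =>
    refine ⟨fun _ => 1, ?_⟩
    have : (List.range 1).reverse = [0] := rfl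
    rw [this]
    show ((([0] : List ℕ).permutations').map (fun w => (X : Polynomial ℤ) ^ ldes w)).sum = _
    simp [ldes]
  | succ n hn ih =>
    obtain ⟨γ, hγ⟩ := ih
    have hrev : (List.range (n+1)).reverse = n :: (List.range n).reverse := by
      rw [List.range_succ, List.reverse_append]
      rfl
    rw [hrev, FF_cons n ((List.range n).reverse)
      (fun x hx => List.mem_range.mp (List.mem_reverse.mp hx))]
    rw [List.length_reverse, List.length_range]
    obtain ⟨γ', hγ'⟩ := gamma_step n hn γ _ hγ
    refine ⟨γ', ?_⟩
    simp only [Nat.add_sub_cancel]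
    exact hγ'

/-- Foata–Schützenberger: the Eulerian polynomial `A_n(q) = Σ_{π ∈ S_n} q^{des π}`
is gamma-positive. -/
theorem stmt3 (n : ℕ) (hn : 1 ≤ n) :
    ∃ γ : ℕ → ℕ,
      (∑ π : Equiv.Perm (Fin n), (X : Polynomial ℤ) ^ des π) =
        ∑ j ∈ Finset.range ((n - 1) / 2 + 1),
          (γ j : Polynomial ℤ) * X ^ j * (1 + X) ^ (n - 1 - 2 * j) := by
  rw [sum_perm_eq_FF]
  exact FF_gamma n hn
end

section
/- For every integer n ≥ 1, the set of bivariate polynomials f(s,t) ∈ ℚ[s,t] satisfying f(s,t) = (st)^{n−1} f(1/s,1/t) and f(s,t) = f(t,s) (bivariate palindromic of darga n−1) is a ℚ-vector subspace of ℚ[s,t] of dimension ⌊(n+1)/2⌋·⌊(n+2)/2⌋, and the set {(st)^i (s+t)^j (1+st)^{n−1−j−2i} : i, j ≥ 0, 2i + j ≤ n−1} is a basis of this subspace. -/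
open MvPolynomial

/-- The coefficient of `s^a t^b` in a bivariate polynomial (`s = X 0`, `t = X 1`). -/
noncomputable def biCoeff (f : MvPolynomial (Fin 2) ℚ) (a b : ℕ) : ℚ :=
  MvPolynomial.coeff (Finsupp.single 0 a + Finsupp.single 1 b) f

/-- A bivariate polynomial `f(s,t)` is palindromic of darga `d` if
`f(s,t) = (st)^d f(1/s,1/t)` (i.e. the coefficient of `s^a t^b` equals the
coefficient of `s^{d-a} t^{d-b}`, and all exponents are at most `d`) and
`f(s,t) = f(t,s)`. -/
def BiPalindromicOfDarga (d : ℕ) (f : MvPolynomial (Fin 2) ℚ) : Prop :=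
  (∀ a b : ℕ, (d < a ∨ d < b) → biCoeff f a b = 0) ∧
  (∀ a b : ℕ, a ≤ d → b ≤ d → biCoeff f a b = biCoeff f (d - a) (d - b)) ∧
  (∀ a b : ℕ, biCoeff f a b = biCoeff f b a)

open Finset

lemma single_eq_iff' (a b A B : ℕ) :
    (Finsupp.single (0:Fin 2) A + Finsupp.single 1 B = Finsupp.single 0 a + Finsupp.single 1 b)
      ↔ (A = a ∧ B = b) := by
  constructor
  · intro h
    constructor
    · have := DFunLike.congr_fun h 0; simpa using this
    · have := DFunLike.congr_fun h 1; simpa using this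
  · rintro ⟨rfl, rfl⟩; rfl

lemma finsupp_fin2 (m : Fin 2 →₀ ℕ) : m = Finsupp.single 0 (m 0) + Finsupp.single 1 (m 1) := by
  ext x; fin_cases x <;> simp

lemma coeff_X0X1 (A B a b : ℕ) :
    biCoeff ((X 0 : MvPolynomial (Fin 2) ℚ)^A * X 1^B) a b = if A = a ∧ B = b then 1 else 0 := by
  rw [biCoeff, X_pow_eq_monomial, X_pow_eq_monomial, monomial_mul, coeff_monomial]
  simp [single_eq_iff']

lemma expand_P (i j k : ℕ) :
    ((X 0 * X 1)^i * (X 0 + X 1)^j * (1 + X 0 * X 1)^k : MvPolynomial (Fin 2) ℚ) =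
    ∑ u ∈ Finset.range (j+1), ∑ m ∈ Finset.range (k+1),
      (((j.choose u : ℚ) * (k.choose m : ℚ)) : ℚ) •
        ((X 0 : MvPolynomial (Fin 2) ℚ)^(i+u+m) * (X 1)^(i+(j-u)+m)) := by
  rw [show ((1 : MvPolynomial (Fin 2) ℚ) + X 0 * X 1) = X 0 * X 1 + 1 by ring]
  rw [add_pow, add_pow, Finset.mul_sum]
  rw [show (∑ m ∈ Finset.range (k+1),
      ((X 0 * X 1) ^ i * ∑ u ∈ Finset.range (j+1),
        (X 0:MvPolynomial (Fin 2) ℚ) ^ u * X 1 ^ (j - u) * (j.choose u : MvPolynomial (Fin 2) ℚ)) *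
        ((X 0 * X 1) ^ m * 1 ^ (k - m) * (k.choose m : MvPolynomial (Fin 2) ℚ)))
      = ∑ m ∈ Finset.range (k+1), ∑ u ∈ Finset.range (j+1),
        ((X 0 * X 1) ^ i * ((X 0:MvPolynomial (Fin 2) ℚ) ^ u * X 1 ^ (j - u) * (j.choose u : MvPolynomial (Fin 2) ℚ))) *
        ((X 0 * X 1) ^ m * 1 ^ (k - m) * (k.choose m : MvPolynomial (Fin 2) ℚ)) from by
    refine Finset.sum_congr rfl fun m _ => ?_
    rw [Finset.mul_sum, Finset.sum_mul]]
  rw [Finset.sum_comm]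
  apply Finset.sum_congr rfl
  intro u hu
  apply Finset.sum_congr rfl
  intro m hm
  have hu' : u ≤ j := by simpa using Nat.lt_succ_iff.mp (Finset.mem_range.mp hu)
  rw [smul_eq_C_mul]
  rw [show (X 0 : MvPolynomial (Fin 2) ℚ)^(i+u+m) = X 0 ^ i * X 0 ^ u * X 0 ^ m by rw [pow_add, pow_add]]
  rw [show (X 1 : MvPolynomial (Fin 2) ℚ)^(i+(j-u)+m) = X 1 ^ i * X 1 ^ (j-u) * X 1 ^ m by rw [pow_add, pow_add]]
  rw [map_mul, show ((j.choose u : MvPolynomial (Fin 2) ℚ)) = C ((j.choose u : ℚ)) by simp,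
    show ((k.choose m : MvPolynomial (Fin 2) ℚ)) = C ((k.choose m : ℚ)) by simp]
  ring

lemma coeff_P (i j k a b : ℕ) :
    biCoeff ((X 0 * X 1)^i * (X 0 + X 1)^j * (1 + X 0 * X 1)^k : MvPolynomial (Fin 2) ℚ) a b =
    ∑ u ∈ Finset.range (j+1), ∑ m ∈ Finset.range (k+1),
      if i + u + m = a ∧ i + (j - u) + m = b then (j.choose u : ℚ) * (k.choose m : ℚ) else 0 := by
  rw [expand_P]
  unfold biCoeff
  rw [MvPolynomial.coeff_sum]
  refine Finset.sum_congr rfl fun u hu => ?_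
  rw [MvPolynomial.coeff_sum]
  refine Finset.sum_congr rfl fun m hm => ?_
  rw [MvPolynomial.coeff_smul]
  have := coeff_X0X1 (i+u+m) (i+(j-u)+m) a b
  unfold biCoeff at this
  rw [this]
  by_cases h : i + u + m = a ∧ i + (j - u) + m = b
  · rw [if_pos h, if_pos h]; simp
  · rw [if_neg h, if_neg h]; simp

lemma coeff_P_lt (i j k a b : ℕ) (h : a + b < 2*i + j) :
    biCoeff ((X 0 * X 1)^i * (X 0 + X 1)^j * (1 + X 0 * X 1)^k : MvPolynomial (Fin 2) ℚ) a b = 0 := by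
  rw [coeff_P]
  refine Finset.sum_eq_zero fun u hu => Finset.sum_eq_zero fun m hm => ?_
  rw [if_neg]
  have hu' := Finset.mem_range.mp hu
  have hm' := Finset.mem_range.mp hm
  omega

lemma coeff_P_eq (i j k a b : ℕ) (h : a + b = 2*i + j) :
    biCoeff ((X 0 * X 1)^i * (X 0 + X 1)^j * (1 + X 0 * X 1)^k : MvPolynomial (Fin 2) ℚ) a b =
    if i ≤ a ∧ a ≤ i + j then (j.choose (a - i) : ℚ) else 0 := by
  rw [coeff_P]
  by_cases hc : i ≤ a ∧ a ≤ i + j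
  · rw [if_pos hc]
    rw [Finset.sum_eq_single_of_mem (a - i) (Finset.mem_range.mpr (by omega))]
    · rw [Finset.sum_eq_single_of_mem 0 (Finset.mem_range.mpr (by omega))]
      · rw [if_pos (by omega)]
        simp
      · intro m hm hm0
        rw [if_neg]
        have := Finset.mem_range.mp hm
        omega
    · intro u hu hu0
      refine Finset.sum_eq_zero fun m hm => ?_
      rw [if_neg]
      have := Finset.mem_range.mp hu
      have := Finset.mem_range.mp hm
      omega
  · rw [if_neg hc]
    refine Finset.sum_eq_zero fun u hu => Finset.sum_eq_zero fun m hm => ?_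
    rw [if_neg]
    have := Finset.mem_range.mp hu
    have := Finset.mem_range.mp hm
    omega

lemma pal_P (d i j : ℕ) (hp : 2*i + j ≤ d) :
    BiPalindromicOfDarga d
      ((X 0 * X 1)^i * (X 0 + X 1)^j * (1 + X 0 * X 1)^(d - j - 2*i) : MvPolynomial (Fin 2) ℚ) := by
  set k := d - j - 2*i with hk
  have hd : d = 2*i + j + k := by omega
  refine ⟨?_, ?_, ?_⟩
  · intro a b hab
    rw [coeff_P]
    refine Finset.sum_eq_zero fun u hu => Finset.sum_eq_zero fun m hm => ?_
    rw [if_neg]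
    have := Finset.mem_range.mp hu
    have := Finset.mem_range.mp hm
    omega
  · intro a b ha hb
    rw [coeff_P, coeff_P]
    rw [← Finset.sum_range_reflect]
    refine Finset.sum_congr rfl fun u hu => ?_
    rw [← Finset.sum_range_reflect]
    refine Finset.sum_congr rfl fun m hm => ?_
    have hu' := Finset.mem_range.mp hu
    have hm' := Finset.mem_range.mp hm
    have e1 : j + 1 - 1 - u = j - u := by omega
    have e2 : k + 1 - 1 - m = k - m := by omega
    rw [e1, e2]
    have hiff : (i + (j - u) + (k - m) = a ∧ i + (j - (j - u)) + (k - m) = b)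
        ↔ (i + u + m = d - a ∧ i + (j - u) + m = d - b) := by omega
    exact if_congr hiff (by rw [Nat.choose_symm (by omega : u ≤ j), Nat.choose_symm (by omega : m ≤ k)]) rfl
  · intro a b
    rw [coeff_P, coeff_P]
    rw [← Finset.sum_range_reflect]
    refine Finset.sum_congr rfl fun u hu => ?_
    refine Finset.sum_congr rfl fun m hm => ?_
    have hu' := Finset.mem_range.mp hu
    have hm' := Finset.mem_range.mp hm
    have e1 : j + 1 - 1 - u = j - u := by omega
    rw [e1]
    have hiff : (i + (j - u) + m = a ∧ i + (j - (j - u)) + m = b)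
        ↔ (i + u + m = b ∧ i + (j - u) + m = a) := by omega
    exact if_congr hiff (by rw [Nat.choose_symm (by omega : u ≤ j)]) rfl

def Tfin (d : ℕ) : Finset (ℕ × ℕ) :=
  (Finset.range (d+1) ×ˢ Finset.range (d+1)).filter (fun p => 2*p.1+p.2 ≤ d)

lemma mem_Tfin {d : ℕ} {p : ℕ × ℕ} : p ∈ Tfin d ↔ 2*p.1+p.2 ≤ d := by
  simp only [Tfin, Finset.mem_filter, Finset.mem_product, Finset.mem_range]
  omega

noncomputable instance instFintypeS (d : ℕ) : Fintype {p : ℕ × ℕ // 2*p.1+p.2 ≤ d} :=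
  Fintype.subtype (Tfin d) (fun _ => mem_Tfin)

lemma card_T (d : ℕ) : (Tfin d).card = ((d+2)/2)*((d+3)/2) := by
  induction d with
  | zero => decide
  | succ d ih =>
    have hsplit : Tfin (d+1) = Tfin d ∪ (Finset.range ((d+1)/2+1)).image (fun i => (i, d+1-2*i)) := by
      ext p
      simp only [mem_Tfin, Finset.mem_union, Finset.mem_image, Finset.mem_range]
      constructor
      · intro h
        by_cases h2 : 2*p.1+p.2 ≤ d
        · exact Or.inl h2
        · exact Or.inr ⟨p.1, by omega, by rw [Prod.ext_iff]; exact ⟨rfl, by omega⟩⟩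
      · rintro (h | ⟨i, hi, rfl⟩)
        · omega
        · simp only
          omega
    have hdisj : Disjoint (Tfin d) ((Finset.range ((d+1)/2+1)).image (fun i => (i, d+1-2*i))) := by
      rw [Finset.disjoint_left]
      intro p hp hp2
      simp only [Finset.mem_image, Finset.mem_range] at hp2
      obtain ⟨i, hi, rfl⟩ := hp2
      rw [mem_Tfin] at hp
      simp at hp
      omega
    rw [hsplit, Finset.card_union_of_disjoint hdisj, ih,
      Finset.card_image_of_injective _ (fun x y h => by simpa using (Prod.ext_iff.mp h).1),
      Finset.card_range]
    have e1 : (d+1+2)/2 = (d+3)/2 := by omega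
    have e2 : (d+1+3)/2 = (d+2)/2 + 1 := by omega
    have e3 : (d+1)/2 + 1 = (d+3)/2 := by omega
    rw [e1, e2, e3]
    ring

lemma card_S (d : ℕ) : Fintype.card {p : ℕ × ℕ // 2*p.1+p.2 ≤ d} = ((d+2)/2)*((d+3)/2) := by
  rw [Fintype.subtype_card (Tfin d) (fun _ => mem_Tfin), card_T]

lemma biCoeff_add (f g : MvPolynomial (Fin 2) ℚ) (a b : ℕ) :
    biCoeff (f + g) a b = biCoeff f a b + biCoeff g a b := MvPolynomial.coeff_add _ _ _

lemma biCoeff_smul (c : ℚ) (f : MvPolynomial (Fin 2) ℚ) (a b : ℕ) :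
    biCoeff (c • f) a b = c * biCoeff f a b := MvPolynomial.coeff_smul _ _ _

noncomputable def W (d : ℕ) : Submodule ℚ (MvPolynomial (Fin 2) ℚ) where
  carrier := {f | BiPalindromicOfDarga d f}
  add_mem' := by
    rintro f g ⟨h1, h2, h3⟩ ⟨g1, g2, g3⟩
    refine ⟨fun a b h => ?_, fun a b ha hb => ?_, fun a b => ?_⟩
    · rw [biCoeff_add, h1 a b h, g1 a b h]; ring
    · rw [biCoeff_add, biCoeff_add, h2 a b ha hb, g2 a b ha hb]
    · rw [biCoeff_add, biCoeff_add, h3 a b, g3 a b]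
  zero_mem' := by
    refine ⟨fun a b h => ?_, fun a b ha hb => ?_, fun a b => ?_⟩ <;> simp [biCoeff]
  smul_mem' := by
    rintro c f ⟨h1, h2, h3⟩
    refine ⟨fun a b h => ?_, fun a b ha hb => ?_, fun a b => ?_⟩
    · rw [biCoeff_smul, h1 a b h]; ring
    · rw [biCoeff_smul, biCoeff_smul, h2 a b ha hb]
    · rw [biCoeff_smul, biCoeff_smul, h3 a b]

lemma mem_W {d : ℕ} {f : MvPolynomial (Fin 2) ℚ} : f ∈ W d ↔ BiPalindromicOfDarga d f := Iff.rfl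

noncomputable def Phi (d : ℕ) :
    MvPolynomial (Fin 2) ℚ →ₗ[ℚ] ({p : ℕ × ℕ // 2*p.1+p.2 ≤ d} → ℚ) :=
  LinearMap.pi (fun p => MvPolynomial.lcoeff ℚ (Finsupp.single 0 p.1.1 + Finsupp.single 1 (p.1.1 + p.1.2)))

lemma Phi_apply (d : ℕ) (f : MvPolynomial (Fin 2) ℚ) (p : {p : ℕ × ℕ // 2*p.1+p.2 ≤ d}) :
    Phi d f p = biCoeff f p.1.1 (p.1.1 + p.1.2) := rfl

lemma eq_zero_of_mem_W (d : ℕ) (f : MvPolynomial (Fin 2) ℚ) (hf : f ∈ W d)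
    (h0 : ∀ p : {p : ℕ × ℕ // 2*p.1+p.2 ≤ d}, biCoeff f p.1.1 (p.1.1 + p.1.2) = 0) :
    f = 0 := by
  obtain ⟨h1, h2, h3⟩ := hf
  have key : ∀ a b : ℕ, a ≤ b → a + b ≤ d → biCoeff f a b = 0 := by
    intro a b hab hs
    have := h0 ⟨(a, b - a), by omega⟩
    simpa [show a + (b - a) = b by omega] using this
  have key2 : ∀ a b : ℕ, a + b ≤ d → biCoeff f a b = 0 := by
    intro a b hs
    rcases le_or_gt a b with h | h
    · exact key a b h hs
    · rw [h3 a b]; exact key b a h.le (by omega)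
  have main : ∀ a b : ℕ, biCoeff f a b = 0 := by
    intro a b
    rcases le_or_gt a d with ha | ha
    · rcases le_or_gt b d with hb | hb
      · rcases le_or_gt (a + b) d with hs | hs
        · exact key2 a b hs
        · rw [h2 a b ha hb]; exact key2 _ _ (by omega)
      · exact h1 a b (Or.inr hb)
    · exact h1 a b (Or.inl ha)
  apply MvPolynomial.ext
  intro m
  have : m = Finsupp.single 0 (m 0) + Finsupp.single 1 (m 1) := finsupp_fin2 m
  rw [this]
  simpa [biCoeff] using main (m 0) (m 1)

lemma W_findim (d : ℕ) : FiniteDimensional ℚ (W d) := by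
  apply FiniteDimensional.of_injective ((Phi d).domRestrict (W d))
  rw [← LinearMap.ker_eq_bot, LinearMap.ker_eq_bot']
  rintro ⟨f, hf⟩ h
  refine Subtype.ext (eq_zero_of_mem_W d f hf fun p => ?_)
  exact congrFun h p

lemma W_finrank_le (d : ℕ) : Module.finrank ℚ (W d) ≤ ((d+2)/2)*((d+3)/2) := by
  have hinj : Function.Injective ((Phi d).domRestrict (W d)) := by
    rw [← LinearMap.ker_eq_bot, LinearMap.ker_eq_bot']
    rintro ⟨f, hf⟩ h
    refine Subtype.ext (eq_zero_of_mem_W d f hf fun p => ?_)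
    exact congrFun h p
  have := LinearMap.finrank_le_finrank_of_injective hinj
  rwa [Module.finrank_fintype_fun_eq_card, card_S] at this

lemma biCoeff_sum {ι : Type*} (s : Finset ι) (F : ι → MvPolynomial (Fin 2) ℚ) (a b : ℕ) :
    biCoeff (∑ i ∈ s, F i) a b = ∑ i ∈ s, biCoeff (F i) a b := by
  simp [biCoeff, MvPolynomial.coeff_sum]

lemma indep (d : ℕ) : LinearIndependent ℚ (fun p : {p : ℕ × ℕ // 2*p.1+p.2 ≤ d} =>
    ((X 0 * X 1)^p.1.1 * (X 0 + X 1)^p.1.2 * (1 + X 0 * X 1)^(d - p.1.2 - 2*p.1.1) :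
      MvPolynomial (Fin 2) ℚ)) := by
  classical
  rw [Fintype.linearIndependent_iff]
  intro g hg
  by_contra hne
  push_neg at hne
  obtain ⟨p0, hp0⟩ := hne
  set Sup := Finset.univ.filter (fun p : {p : ℕ × ℕ // 2*p.1+p.2 ≤ d} => g p ≠ 0) with hSup
  have hSne : Sup.Nonempty := ⟨p0, by simp [hSup, hp0]⟩
  set D := (Sup.image (fun p => 2*p.1.1+p.1.2)).min' (hSne.image _) with hD
  have hDmem := (Sup.image (fun p => 2*p.1.1+p.1.2)).min'_mem (hSne.image _)
  rw [Finset.mem_image] at hDmem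
  set Sup2 := Sup.filter (fun p => 2*p.1.1+p.1.2 = D) with hSup2
  have hS2ne : Sup2.Nonempty := by
    obtain ⟨q, hq, hq2⟩ := hDmem
    exact ⟨q, Finset.mem_filter.mpr ⟨hq, hq2⟩⟩
  set I := (Sup2.image (fun p => p.1.1)).min' (hS2ne.image _) with hI
  have hImem := (Sup2.image (fun p => p.1.1)).min'_mem (hS2ne.image _)
  rw [Finset.mem_image] at hImem
  obtain ⟨q, hq, hqI⟩ := hImem
  have hqS : q ∈ Sup := (Finset.mem_filter.mp hq).1
  have hqD : 2*q.1.1+q.1.2 = D := (Finset.mem_filter.mp hq).2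
  have hgq : g q ≠ 0 := (Finset.mem_filter.mp hqS).2
  -- evaluate the coefficient at (I, I + q.1.2)
  have hcoeff := congrArg (fun f => biCoeff f I (I + q.1.2)) hg
  simp only [biCoeff_sum] at hcoeff
  rw [show biCoeff 0 I (I + q.1.2) = 0 by simp [biCoeff]] at hcoeff
  have hterm : ∀ r : {p : ℕ × ℕ // 2*p.1+p.2 ≤ d}, r ∈ Finset.univ → r ≠ q →
      biCoeff (g r • ((X 0 * X 1)^r.1.1 * (X 0 + X 1)^r.1.2 *
        (1 + X 0 * X 1)^(d - r.1.2 - 2*r.1.1))) I (I + q.1.2) = 0 := by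
    intro r _ hrq
    rw [biCoeff_smul]
    by_cases hgr : g r = 0
    · rw [hgr]; ring
    · have hrS : r ∈ Sup := Finset.mem_filter.mpr ⟨Finset.mem_univ _, hgr⟩
      have hrD : D ≤ 2*r.1.1+r.1.2 :=
        Finset.min'_le _ _ (Finset.mem_image_of_mem _ hrS)
      rcases eq_or_lt_of_le hrD with hEq | hLt
      · -- same degree; then r.1.1 > I
        have hrS2 : r ∈ Sup2 := Finset.mem_filter.mpr ⟨hrS, hEq.symm⟩
        have hrI : I ≤ r.1.1 := Finset.min'_le _ _ (Finset.mem_image_of_mem _ hrS2)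
        have hrIne : r.1.1 ≠ I := by
          intro h
          apply hrq
          have h2 : r.1.2 = q.1.2 := by omega
          exact Subtype.ext (Prod.ext (by omega) h2)
        rw [coeff_P_eq _ _ _ _ _ (by omega), if_neg (by omega)]
        ring
      · rw [coeff_P_lt _ _ _ _ _ (by omega)]
        ring
  rw [Finset.sum_eq_single_of_mem q (Finset.mem_univ q) hterm] at hcoeff
  rw [biCoeff_smul, coeff_P_eq _ _ _ _ _ (by omega), if_pos (by omega)] at hcoeff
  rw [show I - (q.1.1 : ℕ) = 0 from by omega] at hcoeff
  simp at hcoeff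
  exact hgq hcoeff

/-- For every `n ≥ 1`, the bivariate palindromic polynomials of darga `n-1` form a
`ℚ`-vector subspace of `ℚ[s,t]` of dimension `⌊(n+1)/2⌋ ⌊(n+2)/2⌋`, with basis
`{(st)^i (s+t)^j (1+st)^{n-1-j-2i} : i, j ≥ 0, 2i + j ≤ n-1}`. -/
theorem stmt5 (n : ℕ) (hn : 1 ≤ n) :
    ∃ V : Submodule ℚ (MvPolynomial (Fin 2) ℚ),
      (∀ f : MvPolynomial (Fin 2) ℚ, f ∈ V ↔ BiPalindromicOfDarga (n - 1) f) ∧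
      Module.finrank ℚ V = ((n + 1) / 2) * ((n + 2) / 2) ∧
      ∃ b : Module.Basis {p : ℕ × ℕ // 2 * p.1 + p.2 ≤ n - 1} ℚ V,
        ∀ p : {p : ℕ × ℕ // 2 * p.1 + p.2 ≤ n - 1},
          (b p : MvPolynomial (Fin 2) ℚ) =
            (X 0 * X 1) ^ p.val.1 * (X 0 + X 1) ^ p.val.2 *
              (1 + X 0 * X 1) ^ (n - 1 - p.val.2 - 2 * p.val.1) := by
  classical
  set d := n - 1 with hd
  set v : {p : ℕ × ℕ // 2 * p.1 + p.2 ≤ d} → MvPolynomial (Fin 2) ℚ :=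
    fun p => (X 0 * X 1) ^ p.val.1 * (X 0 + X 1) ^ p.val.2 *
      (1 + X 0 * X 1) ^ (d - p.val.2 - 2 * p.val.1) with hv
  have hli : LinearIndependent ℚ v := indep d
  set V := Submodule.span ℚ (Set.range v) with hV
  have hVW : V ≤ W d := by
    rw [hV, Submodule.span_le]
    rintro _ ⟨p, rfl⟩
    exact pal_P d p.1.1 p.1.2 p.2
  have hVrank : Module.finrank ℚ V = ((d+2)/2)*((d+3)/2) := by
    rw [hV, finrank_span_eq_card hli, card_S]
  have hWfin : FiniteDimensional ℚ (W d) := W_findim d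
  have hEq : V = W d :=
    Submodule.eq_of_le_of_finrank_le hVW (by rw [hVrank]; exact W_finrank_le d)
  refine ⟨V, ?_, ?_, ?_⟩
  · intro f
    rw [hEq]
    exact mem_W
  · rw [hVrank]
    have e1 : d + 2 = n + 1 := by omega
    have e2 : d + 3 = n + 2 := by omega
    rw [e1, e2]
  · refine ⟨Module.Basis.span hli, fun p => ?_⟩
    rw [Module.Basis.span_apply]
end

section
/- For each n ≥ 1 there exist nonnegative integers γ_{n,k}, for 0 ≤ k ≤ ⌊(n−1)/2⌋, such that Σ_{π ∈ H(2) ∩ S_n} s^{des(π)} t^{ides(π)} = Σ_{k=0}^{⌊(n−1)/2⌋} γ_{n,k} (st)^k (1+st)^{n−1−2k}. -/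
/-- The number of descents of the inverse permutation. -/
def ides {n : ℕ} (π : Equiv.Perm (Fin n)) : ℕ := des π⁻¹

/-- The direct sum `π ⊕ τ` of permutations: `(π ⊕ τ) i = π i` for `i < m`
and `(π ⊕ τ) (m + j) = m + τ j`. -/
def directSum {m k : ℕ} (π : Equiv.Perm (Fin m)) (τ : Equiv.Perm (Fin k)) :
    Equiv.Perm (Fin (m + k)) :=
  finSumFinEquiv.permCongr (Equiv.sumCongr π τ)

/-- The skew sum `π ⊖ τ` of permutations: `(π ⊖ τ) i = k + π i` for `i < m`
and `(π ⊖ τ) (m + j) = τ j`. -/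
def skewSum {m k : ℕ} (π : Equiv.Perm (Fin m)) (τ : Equiv.Perm (Fin k)) :
    Equiv.Perm (Fin (m + k)) :=
  (finSumFinEquiv.symm.trans
    ((Equiv.sumCongr π τ).trans (Equiv.sumComm (Fin m) (Fin k)))).trans
    (finSumFinEquiv.trans (finCongr (Nat.add_comm k m)))

/-- The separable permutations (the class `H(2)`): the smallest class of permutations
containing the trivial permutation of length 1 and closed under direct sums and
skew sums. -/
inductive SeparablePerm : {n : ℕ} → Equiv.Perm (Fin n) → Prop
  | one : SeparablePerm (1 : Equiv.Perm (Fin 1))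
  | dsum {m k : ℕ} {π : Equiv.Perm (Fin m)} {τ : Equiv.Perm (Fin k)} :
      SeparablePerm π → SeparablePerm τ → SeparablePerm (directSum π τ)
  | ssum {m k : ℕ} {π : Equiv.Perm (Fin m)} {τ : Equiv.Perm (Fin k)} :
      SeparablePerm π → SeparablePerm τ → SeparablePerm (skewSum π τ)


open Finset Equiv

/-- value of a permutation at a natural index -/
def pv {n : ℕ} (π : Perm (Fin n)) (i : ℕ) : ℕ :=
  if h : i < n then ((π ⟨i, h⟩ : Fin n) : ℕ) else i

lemma pv_lt {n : ℕ} (π : Perm (Fin n)) {i : ℕ} (h : i < n) : pv π i < n := by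
  rw [pv, dif_pos h]; exact (π ⟨i, h⟩).2

lemma pv_of_lt {n : ℕ} (π : Perm (Fin n)) {i : ℕ} (h : i < n) :
    pv π i = ((π ⟨i, h⟩ : Fin n) : ℕ) := by rw [pv, dif_pos h]

lemma finSumFinEquiv_symm_mk_left {m k : ℕ} (i : ℕ) (hik : i < m + k) (h : i < m) :
    finSumFinEquiv.symm (⟨i, hik⟩ : Fin (m + k)) = Sum.inl ⟨i, h⟩ := by
  rw [Equiv.symm_apply_eq, finSumFinEquiv_apply_left]
  apply Fin.ext; rfl

lemma finSumFinEquiv_symm_mk_right {m k : ℕ} (i : ℕ) (hik : i < m + k) (h : ¬ i < m) :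
    finSumFinEquiv.symm (⟨i, hik⟩ : Fin (m + k)) = Sum.inr ⟨i - m, by omega⟩ := by
  rw [Equiv.symm_apply_eq, finSumFinEquiv_apply_right]
  apply Fin.ext; simp; omega

lemma directSum_pv {m k : ℕ} (σ : Perm (Fin m)) (τ : Perm (Fin k)) (i : ℕ) (hik : i < m + k) :
    pv (directSum σ τ) i = if h : i < m then pv σ i else m + pv τ (i - m) := by
  rw [pv_of_lt _ hik]
  by_cases h : i < m
  · rw [dif_pos h, pv_of_lt _ h]
    simp [directSum, Equiv.permCongr_apply, finSumFinEquiv_symm_mk_left i hik h]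
  · have hj : i - m < k := by omega
    rw [dif_neg h, pv_of_lt _ hj]
    simp [directSum, Equiv.permCongr_apply, finSumFinEquiv_symm_mk_right i hik h]

lemma skewSum_pv {m k : ℕ} (σ : Perm (Fin m)) (τ : Perm (Fin k)) (i : ℕ) (hik : i < m + k) :
    pv (skewSum σ τ) i = if h : i < m then k + pv σ i else pv τ (i - m) := by
  rw [pv_of_lt _ hik]
  by_cases h : i < m
  · rw [dif_pos h, pv_of_lt _ h]
    simp [skewSum, Equiv.permCongr_apply, finSumFinEquiv_symm_mk_left i hik h]
    omega
  · have hj : i - m < k := by omega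
    rw [dif_neg h, pv_of_lt _ hj]
    simp [skewSum, Equiv.permCongr_apply, finSumFinEquiv_symm_mk_right i hik h]

/-- descent count as a sum over `range (n-1)` -/
def desv {n : ℕ} (π : Perm (Fin n)) : ℕ :=
  ∑ i ∈ range (n - 1), if pv π (i + 1) < pv π i then 1 else 0

lemma des_eq_desv {n : ℕ} (π : Perm (Fin n)) : des π = desv π := by
  classical
  rw [des, Finset.card_filter]
  rw [Fintype.sum_prod_type]
  have h1 : ∀ a : Fin n,
      (∑ b : Fin n, if (b : ℕ) = (a : ℕ) + 1 ∧ π b < π a then 1 else 0) =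
      if h : (a : ℕ) + 1 < n then (if pv π ((a:ℕ)+1) < pv π (a:ℕ) then 1 else 0) else 0 := by
    intro a
    by_cases h : (a : ℕ) + 1 < n
    · rw [dif_pos h]
      rw [Finset.sum_eq_single (⟨(a:ℕ)+1, h⟩ : Fin n)]
      · simp only [pv_of_lt _ h, pv_of_lt _ a.2]
        have ha : (⟨(a:ℕ), a.2⟩ : Fin n) = a := rfl
        rw [ha]
        by_cases hd : π ⟨(a:ℕ)+1, h⟩ < π a
        · rw [if_pos ⟨by simp, hd⟩, if_pos (by exact_mod_cast hd)]
        · rw [if_neg (by tauto), if_neg (by intro hc; exact hd (by exact_mod_cast hc))]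
      · intro b _ hb
        rw [if_neg]
        rintro ⟨hb1, -⟩
        exact hb (Fin.ext hb1)
      · intro hc; exact absurd (Finset.mem_univ _) hc
    · rw [dif_neg h]
      apply Finset.sum_eq_zero
      intro b _
      rw [if_neg]
      rintro ⟨hb1, -⟩
      exact h (hb1 ▸ b.2)
  rw [Finset.sum_congr rfl (fun a _ => h1 a)]
  rw [Fin.sum_univ_eq_sum_range (fun i => if h : i + 1 < n then (if pv π (i+1) < pv π i then 1 else 0) else 0) n]
  rw [desv]
  rcases Nat.eq_zero_or_pos n with hn | hn
  · subst hn; simp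
  · have hrange : range n = range (n-1) ∪ {n-1} := by
      ext i; simp; omega
    have hdisj : Disjoint (range (n-1)) ({n-1} : Finset ℕ) := by
      rw [Finset.disjoint_left]; intro a ha hb; simp at ha hb; omega
    rw [hrange, Finset.sum_union hdisj, Finset.sum_singleton, dif_neg (by omega)]
    have : ∀ i ∈ range (n-1), (if h : i + 1 < n then (if pv π (i+1) < pv π i then 1 else 0) else 0) = (if pv π (i+1) < pv π i then 1 else 0) := by
      intro i hi
      rw [dif_pos (by simp at hi; omega)]
    rw [Finset.sum_congr rfl this]
    simp

lemma desv_direct_shape {n m k : ℕ} (π : Perm (Fin n)) (σ : Perm (Fin m)) (τ : Perm (Fin k))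
    (hn : n = m + k) (hm : 1 ≤ m) (hk : 1 ≤ k)
    (h1 : ∀ i < m, pv π i = pv σ i) (h2 : ∀ j < k, pv π (m + j) = m + pv τ j) :
    desv π = desv σ + desv τ := by
  subst hn
  rw [desv, desv, desv]
  have hsplit : range (m + k - 1) = range (m-1) ∪ {m-1} ∪ (Finset.Ico m (m+k-1)) := by
    ext i; simp [Finset.mem_Ico]; omega
  rw [hsplit, Finset.sum_union, Finset.sum_union]
  · have e1 : ∀ i ∈ range (m-1), (if pv π (i+1) < pv π i then 1 else 0) = if pv σ (i+1) < pv σ i then 1 else 0 := by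
      intro i hi; simp only [Finset.mem_range] at hi
      rw [h1 i (by omega), h1 (i+1) (by omega)]
    have e2 : (∑ i ∈ ({m-1} : Finset ℕ), if pv π (i+1) < pv π i then 1 else 0) = 0 := by
      rw [Finset.sum_singleton, if_neg]
      have hb : m - 1 + 1 = m + 0 := by omega
      rw [hb, h2 0 hk, h1 (m-1) (by omega)]
      have := pv_lt σ (show m - 1 < m by omega)
      omega
    have e3 : (∑ i ∈ Finset.Ico m (m+k-1), if pv π (i+1) < pv π i then 1 else 0) =
        ∑ j ∈ range (k-1), if pv τ (j+1) < pv τ j then 1 else 0 := by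
      rw [show m + k - 1 = m + (k-1) by omega, Finset.sum_Ico_eq_sum_range]
      simp only [Nat.add_sub_cancel_left]
      apply Finset.sum_congr rfl
      intro j hj; simp only [Finset.mem_range] at hj
      rw [show m + j + 1 = m + (j+1) by omega, h2 j (by omega), h2 (j+1) (by omega)]
      by_cases hd : pv τ (j+1) < pv τ j
      · rw [if_pos (by omega), if_pos hd]
      · rw [if_neg (by omega), if_neg hd]
    rw [e2, e3, Finset.sum_congr rfl e1]
    omega
  · rw [Finset.disjoint_left]; intro a ha hb; simp [Finset.mem_Ico] at ha hb; omega
  · rw [Finset.disjoint_left]; intro a ha hb; simp [Finset.mem_Ico] at ha hb; omega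

lemma desv_skew_shape {n m k : ℕ} (π : Perm (Fin n)) (σ : Perm (Fin m)) (τ : Perm (Fin k))
    (hn : n = m + k) (hm : 1 ≤ m) (hk : 1 ≤ k)
    (h1 : ∀ i < m, pv π i = k + pv σ i) (h2 : ∀ j < k, pv π (m + j) = pv τ j) :
    desv π = desv σ + desv τ + 1 := by
  subst hn
  rw [desv, desv, desv]
  have hsplit : range (m + k - 1) = range (m-1) ∪ {m-1} ∪ (Finset.Ico m (m+k-1)) := by
    ext i; simp [Finset.mem_Ico]; omega
  rw [hsplit, Finset.sum_union, Finset.sum_union]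
  · have e1 : ∀ i ∈ range (m-1), (if pv π (i+1) < pv π i then 1 else 0) = if pv σ (i+1) < pv σ i then 1 else 0 := by
      intro i hi; simp only [Finset.mem_range] at hi
      rw [h1 i (by omega), h1 (i+1) (by omega)]
      by_cases hd : pv σ (i+1) < pv σ i
      · rw [if_pos (by omega), if_pos hd]
      · rw [if_neg (by omega), if_neg hd]
    have e2 : (∑ i ∈ ({m-1} : Finset ℕ), if pv π (i+1) < pv π i then 1 else 0) = 1 := by
      rw [Finset.sum_singleton, if_pos]
      have hb : m - 1 + 1 = m + 0 := by omega
      rw [hb, h2 0 hk, h1 (m-1) (by omega)]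
      have := pv_lt τ hk
      omega
    have e3 : (∑ i ∈ Finset.Ico m (m+k-1), if pv π (i+1) < pv π i then 1 else 0) =
        ∑ j ∈ range (k-1), if pv τ (j+1) < pv τ j then 1 else 0 := by
      rw [show m + k - 1 = m + (k-1) by omega, Finset.sum_Ico_eq_sum_range]
      simp only [Nat.add_sub_cancel_left]
      apply Finset.sum_congr rfl
      intro j hj; simp only [Finset.mem_range] at hj
      rw [show m + j + 1 = m + (j+1) by omega, h2 j (by omega), h2 (j+1) (by omega)]
    rw [e2, e3, Finset.sum_congr rfl e1]
    omega
  · rw [Finset.disjoint_left]; intro a ha hb; simp [Finset.mem_Ico] at ha hb; omega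
  · rw [Finset.disjoint_left]; intro a ha hb; simp [Finset.mem_Ico] at ha hb; omega

lemma SeparablePerm.one_le {n : ℕ} {π : Perm (Fin n)} (h : SeparablePerm π) : 1 ≤ n := by
  induction h with
  | one => omega
  | dsum _ _ ih1 ih2 => omega
  | ssum _ _ ih1 ih2 => omega

/-- transport a permutation along an equality of sizes -/
def pcast {n n' : ℕ} (h : n = n') (π : Perm (Fin n)) : Perm (Fin n') :=
  (finCongr h).permCongr π

lemma pcast_pv {n n' : ℕ} (h : n = n') (π : Perm (Fin n)) (i : ℕ) :
    pv (pcast h π) i = pv π i := by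
  subst h
  rcases Nat.lt_or_ge i n with hi | hi
  · rw [pv_of_lt _ hi, pv_of_lt _ hi]
    rfl
  · rw [pv, pv, dif_neg (by omega), dif_neg (by omega)]

lemma pcast_sep {n n' : ℕ} (h : n = n') {π : Perm (Fin n)} (hs : SeparablePerm π) :
    SeparablePerm (pcast h π) := by
  subst h
  have : pcast rfl π = π := by
    apply Equiv.ext; intro i; rfl
  rw [this]; exact hs

lemma pcast_inv {n n' : ℕ} (h : n = n') (π : Perm (Fin n)) :
    (pcast h π)⁻¹ = pcast h π⁻¹ := by
  subst h; apply Equiv.ext; intro i; rfl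

lemma desv_pcast {n n' : ℕ} (h : n = n') (π : Perm (Fin n)) :
    desv (pcast h π) = desv π := by
  subst h; rw [desv, desv]
  exact Finset.sum_congr rfl (fun i _ => by rw [pcast_pv, pcast_pv])

lemma directSum_inv_pv {m k : ℕ} (σ : Perm (Fin m)) (τ : Perm (Fin k)) (v : ℕ) (hv : v < m + k) :
    pv (directSum σ τ)⁻¹ v = if v < m then pv σ⁻¹ v else m + pv τ⁻¹ (v - m) := by
  by_cases h : v < m
  · rw [if_pos h, pv_of_lt _ hv, pv_of_lt _ h]
    have : (directSum σ τ)⁻¹ ⟨v, hv⟩ = ⟨(σ⁻¹ ⟨v, h⟩ : Fin m), by omega⟩ := by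
      rw [Equiv.Perm.inv_def, Equiv.symm_apply_eq]
      apply Fin.ext
      have := directSum_pv σ τ ((σ⁻¹ ⟨v, h⟩ : Fin m) : ℕ) (by omega)
      rw [pv_of_lt _ (show ((σ⁻¹ ⟨v,h⟩ : Fin m):ℕ) < m + k by omega)] at this
      rw [this, dif_pos (σ⁻¹ ⟨v, h⟩).2, pv_of_lt _ (σ⁻¹ ⟨v, h⟩).2]
      simp
    rw [this]
  · rw [if_neg h]
    have hvk : v - m < k := by omega
    rw [pv_of_lt _ hv, pv_of_lt _ hvk]
    have : (directSum σ τ)⁻¹ ⟨v, hv⟩ = ⟨m + (τ⁻¹ ⟨v - m, hvk⟩ : Fin k), by omega⟩ := by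
      rw [Equiv.Perm.inv_def, Equiv.symm_apply_eq]
      apply Fin.ext
      have := directSum_pv σ τ (m + ((τ⁻¹ ⟨v - m, hvk⟩ : Fin k) : ℕ)) (by omega)
      rw [pv_of_lt _ (show m + ((τ⁻¹ ⟨v-m,hvk⟩ : Fin k):ℕ) < m + k by omega)] at this
      rw [this, dif_neg (by omega)]
      simp only [Nat.add_sub_cancel_left]
      rw [pv_of_lt _ (τ⁻¹ ⟨v - m, hvk⟩).2]
      simp
      omega
    rw [this]

lemma skewSum_inv_pv {m k : ℕ} (σ : Perm (Fin m)) (τ : Perm (Fin k)) (v : ℕ) (hv : v < m + k) :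
    pv (skewSum σ τ)⁻¹ v = if v < k then m + pv τ⁻¹ v else pv σ⁻¹ (v - k) := by
  by_cases h : v < k
  · rw [if_pos h, pv_of_lt _ hv, pv_of_lt _ h]
    have : (skewSum σ τ)⁻¹ ⟨v, hv⟩ = ⟨m + (τ⁻¹ ⟨v, h⟩ : Fin k), by omega⟩ := by
      rw [Equiv.Perm.inv_def, Equiv.symm_apply_eq]
      apply Fin.ext
      have := skewSum_pv σ τ (m + ((τ⁻¹ ⟨v, h⟩ : Fin k) : ℕ)) (by omega)
      rw [pv_of_lt _ (show m + ((τ⁻¹ ⟨v,h⟩ : Fin k):ℕ) < m + k by omega)] at this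
      rw [this, dif_neg (by omega)]
      simp only [Nat.add_sub_cancel_left]
      rw [pv_of_lt _ (τ⁻¹ ⟨v, h⟩).2]
      simp
    rw [this]
  · rw [if_neg h]
    have hvk : v - k < m := by omega
    rw [pv_of_lt _ hv, pv_of_lt _ hvk]
    have : (skewSum σ τ)⁻¹ ⟨v, hv⟩ = ⟨(σ⁻¹ ⟨v - k, hvk⟩ : Fin m), by omega⟩ := by
      rw [Equiv.Perm.inv_def, Equiv.symm_apply_eq]
      apply Fin.ext
      have := skewSum_pv σ τ ((σ⁻¹ ⟨v - k, hvk⟩ : Fin m) : ℕ) (by omega)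
      rw [pv_of_lt _ (show ((σ⁻¹ ⟨v-k,hvk⟩ : Fin m):ℕ) < m + k by omega)] at this
      rw [this, dif_pos (σ⁻¹ ⟨v - k, hvk⟩).2, pv_of_lt _ (σ⁻¹ ⟨v - k, hvk⟩).2]
      simp
      omega
    rw [this]

lemma desv_directSum {m k : ℕ} (σ : Perm (Fin m)) (τ : Perm (Fin k)) (hm : 1 ≤ m) (hk : 1 ≤ k) :
    desv (directSum σ τ) = desv σ + desv τ :=
  desv_direct_shape _ σ τ rfl hm hk
    (fun i hi => by rw [directSum_pv σ τ i (by omega), dif_pos hi])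
    (fun j hj => by rw [directSum_pv σ τ (m+j) (by omega), dif_neg (by omega)]; simp)

lemma desv_skewSum {m k : ℕ} (σ : Perm (Fin m)) (τ : Perm (Fin k)) (hm : 1 ≤ m) (hk : 1 ≤ k) :
    desv (skewSum σ τ) = desv σ + desv τ + 1 :=
  desv_skew_shape _ σ τ rfl hm hk
    (fun i hi => by rw [skewSum_pv σ τ i (by omega), dif_pos hi])
    (fun j hj => by rw [skewSum_pv σ τ (m+j) (by omega), dif_neg (by omega)]; simp)

lemma desv_directSum_inv {m k : ℕ} (σ : Perm (Fin m)) (τ : Perm (Fin k)) (hm : 1 ≤ m) (hk : 1 ≤ k) :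
    desv (directSum σ τ)⁻¹ = desv σ⁻¹ + desv τ⁻¹ :=
  desv_direct_shape _ σ⁻¹ τ⁻¹ rfl hm hk
    (fun i hi => by rw [directSum_inv_pv σ τ i (by omega), if_pos hi])
    (fun j hj => by rw [directSum_inv_pv σ τ (m+j) (by omega), if_neg (by omega)]; simp)

lemma desv_skewSum_inv {m k : ℕ} (σ : Perm (Fin m)) (τ : Perm (Fin k)) (hm : 1 ≤ m) (hk : 1 ≤ k) :
    desv (skewSum σ τ)⁻¹ = desv τ⁻¹ + desv σ⁻¹ + 1 :=
  desv_skew_shape _ τ⁻¹ σ⁻¹ (Nat.add_comm m k) hk hm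
    (fun i hi => by rw [skewSum_inv_pv σ τ i (by omega), if_pos hi])
    (fun j hj => by rw [skewSum_inv_pv σ τ (k+j) (by omega), if_neg (by omega)]; simp)

lemma sep_ides_eq_des {n : ℕ} {π : Perm (Fin n)} (h : SeparablePerm π) : ides π = des π := by
  rw [ides, des_eq_desv, des_eq_desv]
  induction h with
  | one =>
    have : (1 : Perm (Fin 1))⁻¹ = 1 := by simp
    rw [this]
  | dsum h1 h2 ih1 ih2 =>
    rename_i m k σ τ
    rw [desv_directSum_inv σ τ h1.one_le h2.one_le, desv_directSum σ τ h1.one_le h2.one_le,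
      ih1, ih2]
  | ssum h1 h2 ih1 ih2 =>
    rename_i m k σ τ
    rw [desv_skewSum_inv σ τ h1.one_le h2.one_le, desv_skewSum σ τ h1.one_le h2.one_le,
      ih1, ih2]
    omega

/-! ### breakpoints and components -/

def bp {n : ℕ} (π : Perm (Fin n)) (m : ℕ) : Prop := ∀ i < n, (i < m ↔ pv π i < m)

lemma pv_inv_pv {n : ℕ} (π : Perm (Fin n)) {i : ℕ} (hi : i < n) :
    pv π⁻¹ (pv π i) = i := by
  rw [pv_of_lt _ hi, pv_of_lt _ (π ⟨i, hi⟩).2]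
  have : (⟨((π ⟨i, hi⟩ : Fin n) : ℕ), (π ⟨i, hi⟩).2⟩ : Fin n) = π ⟨i, hi⟩ := rfl
  rw [this, Equiv.Perm.inv_def, Equiv.symm_apply_apply]

lemma pv_pv_inv {n : ℕ} (π : Perm (Fin n)) {v : ℕ} (hv : v < n) :
    pv π (pv π⁻¹ v) = v := by
  have := pv_inv_pv π⁻¹ hv
  rwa [inv_inv] at this

lemma pv_inj {n : ℕ} (π : Perm (Fin n)) {i j : ℕ} (hi : i < n) (hj : j < n)
    (h : pv π i = pv π j) : i = j := by
  have h1 := pv_inv_pv π hi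
  have h2 := pv_inv_pv π hj
  rw [h] at h1; rw [h1] at h2; exact h2

lemma bp_inv {n : ℕ} {π : Perm (Fin n)} {m : ℕ} (h : bp π m) : bp π⁻¹ m := by
  intro v hv
  have hu : pv π⁻¹ v < n := pv_lt _ hv
  have := h _ hu
  rw [pv_pv_inv π hv] at this
  exact this.symm

def leftp {n : ℕ} (π : Perm (Fin n)) (m : ℕ) (hm : m ≤ n) (hbp : bp π m) : Perm (Fin m) where
  toFun i := ⟨pv π i.1, (hbp i.1 (lt_of_lt_of_le i.2 hm)).mp i.2⟩
  invFun i := ⟨pv π⁻¹ i.1, (bp_inv hbp i.1 (lt_of_lt_of_le i.2 hm)).mp i.2⟩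
  left_inv i := Fin.ext (pv_inv_pv π (lt_of_lt_of_le i.2 hm))
  right_inv i := Fin.ext (pv_pv_inv π (lt_of_lt_of_le i.2 hm))

lemma leftp_pv {n : ℕ} (π : Perm (Fin n)) (m : ℕ) (hm : m ≤ n) (hbp : bp π m)
    {i : ℕ} (hi : i < m) : pv (leftp π m hm hbp) i = pv π i := by
  rw [pv_of_lt _ hi]; rfl

def rightp {n : ℕ} (π : Perm (Fin n)) (m : ℕ) (hm : m ≤ n) (hbp : bp π m) :
    Perm (Fin (n - m)) where
  toFun j := ⟨pv π (m + j.1) - m, by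
    have h1 : m + j.1 < n := by omega
    have h2 := pv_lt π h1
    have h3 := hbp _ h1
    omega⟩
  invFun j := ⟨pv π⁻¹ (m + j.1) - m, by
    have h1 : m + j.1 < n := by omega
    have h2 := pv_lt π⁻¹ h1
    have h3 := bp_inv hbp _ h1
    omega⟩
  left_inv j := by
    apply Fin.ext
    show pv π⁻¹ (m + (pv π (m + j.1) - m)) - m = j.1
    have h1 : m + j.1 < n := by omega
    have h3 := hbp _ h1
    have h2 := pv_lt π h1
    rw [Nat.add_sub_cancel' (by omega : m ≤ pv π (m + j.1)), pv_inv_pv π h1]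
    omega
  right_inv j := by
    apply Fin.ext
    show pv π (m + (pv π⁻¹ (m + j.1) - m)) - m = j.1
    have h1 : m + j.1 < n := by omega
    have h3 := bp_inv hbp _ h1
    have h2 := pv_lt π⁻¹ h1
    rw [Nat.add_sub_cancel' (by omega : m ≤ pv π⁻¹ (m + j.1)), pv_pv_inv π h1]
    omega

lemma rightp_pv {n : ℕ} (π : Perm (Fin n)) (m : ℕ) (hm : m ≤ n) (hbp : bp π m)
    {j : ℕ} (hj : j < n - m) : pv (rightp π m hm hbp) j = pv π (m + j) - m := by
  rw [pv_of_lt _ hj]; rfl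

lemma perm_ext_pv {n : ℕ} {π ρ : Perm (Fin n)} (h : ∀ i < n, pv π i = pv ρ i) : π = ρ := by
  apply Equiv.ext
  intro i
  apply Fin.ext
  have := h i.1 i.2
  rwa [pv_of_lt _ i.2, pv_of_lt _ i.2] at this

/-- recomposition map: `m ≤ n`, glue a permutation of `Fin m` and one of `Fin (n-m)`. -/
def dsumC {n m : ℕ} (hm : m ≤ n) (σ : Perm (Fin m)) (τ : Perm (Fin (n - m))) :
    Perm (Fin n) := pcast (by omega) (directSum σ τ)

lemma dsumC_pv {n m : ℕ} (hm : m ≤ n) (σ : Perm (Fin m)) (τ : Perm (Fin (n - m)))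
    {i : ℕ} (hi : i < n) :
    pv (dsumC hm σ τ) i = if i < m then pv σ i else m + pv τ (i - m) := by
  rw [dsumC, pcast_pv, directSum_pv σ τ i (by omega)]
  by_cases h : i < m
  · rw [dif_pos h, if_pos h]
  · rw [dif_neg h, if_neg h]

lemma bp_dsumC {n m : ℕ} (hm : m ≤ n) (σ : Perm (Fin m)) (τ : Perm (Fin (n - m))) :
    bp (dsumC hm σ τ) m := by
  intro i hi
  rw [dsumC_pv hm σ τ hi]
  by_cases h : i < m
  · rw [if_pos h]; exact ⟨fun _ => pv_lt σ h, fun _ => h⟩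
  · rw [if_neg h]; constructor
    · intro hc; exact absurd hc h
    · intro hc; omega

lemma leftp_dsumC {n m : ℕ} (hm : m ≤ n) (σ : Perm (Fin m)) (τ : Perm (Fin (n - m)))
    (hbp : bp (dsumC hm σ τ) m) : leftp (dsumC hm σ τ) m hm hbp = σ := by
  apply perm_ext_pv
  intro i hi
  rw [leftp_pv _ _ _ _ hi, dsumC_pv hm σ τ (by omega), if_pos hi]

lemma rightp_dsumC {n m : ℕ} (hm : m ≤ n) (σ : Perm (Fin m)) (τ : Perm (Fin (n - m)))
    (hbp : bp (dsumC hm σ τ) m) : rightp (dsumC hm σ τ) m hm hbp = τ := by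
  apply perm_ext_pv
  intro j hj
  rw [rightp_pv _ _ _ _ hj, dsumC_pv hm σ τ (by omega : m + j < n), if_neg (by omega),
    Nat.add_sub_cancel_left, Nat.add_sub_cancel_left]

lemma dsumC_recompose {n m : ℕ} (π : Perm (Fin n)) (hm : m ≤ n) (hbp : bp π m) :
    dsumC hm (leftp π m hm hbp) (rightp π m hm hbp) = π := by
  apply perm_ext_pv
  intro i hi
  rw [dsumC_pv]
  · by_cases h : i < m
    · rw [if_pos h, leftp_pv _ _ _ _ h]
    · rw [if_neg h, rightp_pv _ _ _ _ (by omega)]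
      have h3 := hbp _ hi
      have := pv_lt π hi
      rw [show m + (i - m) = i by omega]
      omega
  · exact hi

lemma desv_dsumC {n m : ℕ} (hm1 : 1 ≤ m) (hmn : m < n) (σ : Perm (Fin m))
    (τ : Perm (Fin (n - m))) :
    desv (dsumC hmn.le σ τ) = desv σ + desv τ := by
  rw [dsumC, desv_pcast, desv_directSum σ τ hm1 (by omega)]

lemma sep_dsumC {n m : ℕ} (hm : m ≤ n) {σ : Perm (Fin m)} {τ : Perm (Fin (n - m))}
    (hσ : SeparablePerm σ) (hτ : SeparablePerm τ) : SeparablePerm (dsumC hm σ τ) :=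
  pcast_sep _ (SeparablePerm.dsum hσ hτ)

lemma bp_leftp {n m m' : ℕ} (π : Perm (Fin n)) (hm : m ≤ n) (hbp : bp π m)
    (hm' : m' ≤ m) (h' : bp π m') : bp (leftp π m hm hbp) m' := by
  intro i hi
  rw [leftp_pv _ _ _ _ hi]
  exact h' i (by omega)

lemma bp_of_bp_leftp {n m m' : ℕ} (π : Perm (Fin n)) (hm : m ≤ n) (hbp : bp π m)
    (hm' : m' ≤ m) (h' : bp (leftp π m hm hbp) m') : bp π m' := by
  intro i hi
  by_cases h : i < m
  · have := h' i h
    rwa [leftp_pv _ _ _ _ h] at this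
  · have h3 := hbp _ hi
    constructor
    · intro hc; omega
    · intro hc; omega

/-! ### reversal -/

def revp (n : ℕ) : Perm (Fin n) where
  toFun i := ⟨n - 1 - i.1, by have := i.2; omega⟩
  invFun i := ⟨n - 1 - i.1, by have := i.2; omega⟩
  left_inv i := Fin.ext (by have := i.2; simp; omega)
  right_inv i := Fin.ext (by have := i.2; simp; omega)

lemma revp_pv {n : ℕ} (π : Perm (Fin n)) {i : ℕ} (hi : i < n) :
    pv (revp n * π) i = n - 1 - pv π i := by
  rw [pv_of_lt _ hi, pv_of_lt _ hi]
  rfl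

lemma rev_rev {n : ℕ} (π : Perm (Fin n)) : revp n * (revp n * π) = π := by
  apply perm_ext_pv
  intro i hi
  rw [revp_pv _ hi, revp_pv _ hi]
  have := pv_lt π hi
  omega

lemma rev_directSum {a b : ℕ} (σ : Perm (Fin a)) (τ : Perm (Fin b)) :
    revp (a + b) * directSum σ τ = skewSum (revp a * σ) (revp b * τ) := by
  apply perm_ext_pv
  intro i hi
  rw [revp_pv _ hi, directSum_pv _ _ _ hi, skewSum_pv _ _ _ hi]
  by_cases h : i < a
  · rw [dif_pos h, dif_pos h, revp_pv _ h]
    have := pv_lt σ h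
    omega
  · rw [dif_neg h, dif_neg h, revp_pv _ (show i - a < b by omega)]
    have := pv_lt τ (show i - a < b by omega)
    omega

lemma rev_skewSum {a b : ℕ} (σ : Perm (Fin a)) (τ : Perm (Fin b)) :
    revp (a + b) * skewSum σ τ = directSum (revp a * σ) (revp b * τ) := by
  apply perm_ext_pv
  intro i hi
  rw [revp_pv _ hi, directSum_pv _ _ _ hi, skewSum_pv _ _ _ hi]
  by_cases h : i < a
  · rw [dif_pos h, dif_pos h, revp_pv _ h]
    have := pv_lt σ h
    omega
  · rw [dif_neg h, dif_neg h, revp_pv _ (show i - a < b by omega)]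
    have := pv_lt τ (show i - a < b by omega)
    omega

lemma sep_rev {n : ℕ} {π : Perm (Fin n)} (hs : SeparablePerm π) :
    SeparablePerm (revp n * π) := by
  induction hs with
  | one =>
    have : revp 1 * (1 : Perm (Fin 1)) = 1 := by
      apply perm_ext_pv
      intro i hi
      interval_cases i
      rw [revp_pv _ (by omega)]
      have := pv_lt (1 : Perm (Fin 1)) (show 0 < 1 by omega)
      omega
    rw [this]; exact SeparablePerm.one
  | dsum h1 h2 ih1 ih2 =>
    rw [rev_directSum]
    exact SeparablePerm.ssum ih1 ih2
  | ssum h1 h2 ih1 ih2 =>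
    rw [rev_skewSum]
    exact SeparablePerm.dsum ih1 ih2

lemma desv_le {n : ℕ} (π : Perm (Fin n)) : desv π ≤ n - 1 := by
  rw [desv]
  calc (∑ i ∈ range (n-1), if pv π (i+1) < pv π i then 1 else 0)
      ≤ ∑ _i ∈ range (n-1), 1 := Finset.sum_le_sum (fun i _ => by split <;> omega)
    _ = n - 1 := by simp

lemma desv_rev {n : ℕ} (π : Perm (Fin n)) : desv (revp n * π) = n - 1 - desv π := by
  have key : desv (revp n * π) + desv π = n - 1 := by
    rw [desv, desv, ← Finset.sum_add_distrib]
    have : ∀ i ∈ range (n-1),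
        ((if pv (revp n * π) (i+1) < pv (revp n * π) i then 1 else 0) +
         (if pv π (i+1) < pv π i then 1 else 0)) = 1 := by
      intro i hi
      simp only [Finset.mem_range] at hi
      have hi1 : i + 1 < n := by omega
      have hi0 : i < n := by omega
      rw [revp_pv _ hi1, revp_pv _ hi0]
      have ha := pv_lt π hi0
      have hb := pv_lt π hi1
      have hne : pv π i ≠ pv π (i+1) := fun h => by
        have := pv_inj π hi0 hi1 h; omega
      split_ifs <;> omega
    rw [Finset.sum_congr rfl this]
    simp
  have := desv_le π
  omega

/-! ### no breakpoints of skew sums -/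

lemma not_bp_skewSum {a b : ℕ} (σ : Perm (Fin a)) (τ : Perm (Fin b))
    (ha : 1 ≤ a) (hb : 1 ≤ b) {m : ℕ} (hm1 : 1 ≤ m) (hmn : m < a + b) :
    ¬ bp (skewSum σ τ) m := by
  intro hbp
  have hbi := bp_inv hbp
  -- position of value 0 is `a + τ⁻¹ 0 ≥ a`, and it is `< m`
  have h0 : pv (skewSum σ τ)⁻¹ 0 = a + pv τ⁻¹ 0 := by
    rw [skewSum_inv_pv σ τ 0 (by omega), if_pos (by omega : (0:ℕ) < b)]
  have hlt : pv (skewSum σ τ)⁻¹ 0 < m := (hbi 0 (by omega)).mp hm1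
  have ham : a < m := by omega
  -- position of value (a+b-1) is `σ⁻¹ (a-1) < a < m`, so `a+b-1 < m`: contradiction
  have h1 : pv (skewSum σ τ)⁻¹ (a + b - 1) = pv σ⁻¹ (a + b - 1 - b) := by
    rw [skewSum_inv_pv σ τ _ (by omega), if_neg (by omega)]
  have hp1 : pv (skewSum σ τ)⁻¹ (a + b - 1) < m := by
    rw [h1]
    have := pv_lt σ⁻¹ (show a + b - 1 - b < a by omega)
    omega
  have := (hbi (a + b - 1) (by omega)).mpr hp1
  omega

lemma not_bp_rev_directSum {a b : ℕ} (σ : Perm (Fin a)) (τ : Perm (Fin b))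
    (ha : 1 ≤ a) (hb : 1 ≤ b) {m : ℕ} (hm1 : 1 ≤ m) (hmn : m < a + b) :
    ¬ bp (revp (a+b) * directSum σ τ) m := by
  rw [rev_directSum]
  exact not_bp_skewSum _ _ ha hb hm1 hmn

lemma bp_directSum_left {a b m : ℕ} {σ : Perm (Fin a)} {τ : Perm (Fin b)}
    (hbp : bp (directSum σ τ) m) (hma : m ≤ a) : bp σ m := by
  intro i hi
  have := hbp i (by omega)
  rwa [directSum_pv _ _ _ (by omega), dif_pos hi] at this

lemma bp_directSum_right {a b m : ℕ} {σ : Perm (Fin a)} {τ : Perm (Fin b)}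
    (hbp : bp (directSum σ τ) m) (ham : a ≤ m) : bp τ (m - a) := by
  intro j hj
  have := hbp (a + j) (by omega)
  rw [directSum_pv _ _ _ (by omega), dif_neg (by omega), Nat.add_sub_cancel_left] at this
  omega

lemma sep_hered {n : ℕ} {π : Perm (Fin n)} (hs : SeparablePerm π) :
    ∀ m, 1 ≤ m → m < n → ∀ (hm : m ≤ n) (hbp : bp π m),
      SeparablePerm (leftp π m hm hbp) ∧ SeparablePerm (rightp π m hm hbp) := by
  induction hs with
  | one =>
    intro m hm1 hmn _ _
    omega
  | dsum h1 h2 ih1 ih2 =>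
    rename_i a b σ τ
    intro m hm1 hmn hm hbp
    rcases Nat.lt_trichotomy m a with hma | hma | hma
    · -- m < a
      have hbpσ : bp σ m := bp_directSum_left hbp (by omega)
      have hL : leftp (directSum σ τ) m hm hbp = leftp σ m (by omega) hbpσ := by
        apply perm_ext_pv
        intro i hi
        rw [leftp_pv _ _ _ _ hi, leftp_pv _ _ _ _ hi,
          directSum_pv _ _ _ (by omega), dif_pos (by omega)]
      have hR : rightp (directSum σ τ) m hm hbp =
          pcast (by omega : (a - m) + b = a + b - m)
            (directSum (rightp σ m (by omega) hbpσ) τ) := by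
        apply perm_ext_pv
        intro j hj
        rw [rightp_pv _ _ _ _ hj, directSum_pv σ τ (m+j) (by omega), pcast_pv,
          directSum_pv _ _ j (by omega)]
        by_cases h : j < a - m
        · rw [dif_pos (by omega : m + j < a), dif_pos h, rightp_pv _ _ _ _ (by omega)]
        · rw [dif_neg (by omega : ¬ m + j < a), dif_neg h]
          have hτ : m + j - a = j - (a - m) := by omega
          rw [hτ]
          have := pv_lt τ (show j - (a-m) < b by omega)
          omega
      constructor
      · rw [hL]; exact (ih1 m hm1 hma (by omega) hbpσ).1
      · rw [hR]
        exact pcast_sep _ (SeparablePerm.dsum (ih1 m hm1 hma (by omega) hbpσ).2 h2)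
    · -- m = a
      subst hma
      have hL : leftp (directSum σ τ) m hm hbp = σ := by
        apply perm_ext_pv
        intro i hi
        rw [leftp_pv _ _ _ _ hi, directSum_pv _ _ _ (by omega), dif_pos hi]
      have hR : rightp (directSum σ τ) m hm hbp = pcast (by omega : b = m + b - m) τ := by
        apply perm_ext_pv
        intro j hj
        rw [rightp_pv _ _ _ _ hj, pcast_pv, directSum_pv _ _ _ (by omega),
          dif_neg (by omega), Nat.add_sub_cancel_left, Nat.add_sub_cancel_left]
      constructor
      · rw [hL]; exact h1
      · rw [hR]; exact pcast_sep _ h2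
    · -- a < m
      have hbpτ : bp τ (m - a) := bp_directSum_right hbp (by omega)
      have hL : leftp (directSum σ τ) m hm hbp =
          pcast (by omega : a + (m - a) = m)
            (directSum σ (leftp τ (m - a) (by omega) hbpτ)) := by
        apply perm_ext_pv
        intro i hi
        rw [leftp_pv _ _ _ _ hi, pcast_pv, directSum_pv _ _ i (by omega),
          directSum_pv _ _ i (by omega)]
        by_cases h : i < a
        · rw [dif_pos h, dif_pos h]
        · rw [dif_neg h, dif_neg h, leftp_pv _ _ _ _ (by omega)]
      have hR : rightp (directSum σ τ) m hm hbp =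
          pcast (by omega : b - (m - a) = a + b - m)
            (rightp τ (m - a) (by omega) hbpτ) := by
        apply perm_ext_pv
        intro j hj
        rw [rightp_pv _ _ _ _ hj, pcast_pv, rightp_pv _ _ _ _ (by omega),
          directSum_pv _ _ _ (by omega), dif_neg (by omega)]
        have hτ : m + j - a = m - a + j := by omega
        rw [hτ]
        have := hbpτ (m - a + j) (by omega)
        have := pv_lt τ (show m - a + j < b by omega)
        omega
      constructor
      · rw [hL]
        exact pcast_sep _ (SeparablePerm.dsum h1 (ih2 (m-a) (by omega) (by omega) (by omega) hbpτ).1)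
      · rw [hR]
        exact pcast_sep _ ((ih2 (m-a) (by omega) (by omega) (by omega) hbpτ).2)
  | ssum h1 h2 ih1 ih2 =>
    rename_i a b σ τ
    intro m hm1 hmn hm hbp
    exact absurd hbp (not_bp_skewSum σ τ h1.one_le h2.one_le hm1 hmn)

lemma revp_inv (n : ℕ) : (revp n)⁻¹ = revp n := rfl

lemma pv_rev_inv {n : ℕ} (π : Perm (Fin n)) {v : ℕ} (hv : v < n) :
    pv (revp n * π)⁻¹ v = pv π⁻¹ (n - 1 - v) := by
  rw [mul_inv_rev, revp_inv]
  rw [pv_of_lt _ hv, pv_of_lt _ (show n - 1 - v < n by omega)]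
  rfl

lemma bp_exclusive {n : ℕ} (π : Perm (Fin n)) {m m' : ℕ}
    (hm1 : 1 ≤ m) (hmn : m < n) (hm1' : 1 ≤ m') (hmn' : m' < n)
    (hb : bp π m) (hb' : bp (revp n * π) m') : False := by
  have hbi := bp_inv hb
  have hbi' := bp_inv hb'
  set p0 := pv π⁻¹ 0 with hp0
  set pT := pv π⁻¹ (n-1) with hpT
  have h1 : p0 < m := (hbi 0 (by omega)).mp hm1
  have h2 : ¬ pT < m := by
    intro hc
    have := (hbi (n-1) (by omega)).mpr hc
    omega
  have e1 : pv (revp n * π)⁻¹ 0 = pT := by rw [pv_rev_inv _ (by omega)]; simp [hpT]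
  have e2 : pv (revp n * π)⁻¹ (n-1) = p0 := by
    rw [pv_rev_inv _ (by omega)]
    rw [show n - 1 - (n-1) = 0 by omega]
  have h3 : pT < m' := by
    have := (hbi' 0 (by omega)).mp hm1'
    rwa [e1] at this
  have h4 : ¬ p0 < m' := by
    intro hc
    have := (hbi' (n-1) (by omega)).mpr (by rwa [e2])
    omega
  omega

lemma bp_directSum_self {a b : ℕ} (σ : Perm (Fin a)) (τ : Perm (Fin b)) :
    bp (directSum σ τ) a := by
  intro i hi
  rw [directSum_pv _ _ _ hi]
  by_cases h : i < a
  · rw [dif_pos h]; exact ⟨fun _ => pv_lt σ h, fun _ => h⟩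
  · rw [dif_neg h]; exact ⟨fun hc => absurd hc h, fun hc => by omega⟩

lemma sep_cover {n : ℕ} {π : Perm (Fin n)} (hs : SeparablePerm π) (hn : 2 ≤ n) :
    (∃ m, 1 ≤ m ∧ m < n ∧ bp π m) ∨ (∃ m, 1 ≤ m ∧ m < n ∧ bp (revp n * π) m) := by
  cases hs with
  | one => omega
  | dsum h1 h2 =>
    rename_i a b σ τ
    exact Or.inl ⟨a, h1.one_le, by have := h2.one_le; omega, bp_directSum_self σ τ⟩
  | ssum h1 h2 =>
    rename_i a b σ τ
    refine Or.inr ⟨a, h1.one_le, by have := h2.one_le; omega, ?_⟩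
    rw [rev_skewSum]
    exact bp_directSum_self _ _

/-! ### counting -/

section Counting
open scoped Classical

noncomputable def SepS (n : ℕ) : Finset (Perm (Fin n)) :=
  Finset.univ.filter (fun π => SeparablePerm π)

def indec {n : ℕ} (π : Perm (Fin n)) : Prop := ∀ m, 1 ≤ m → m < n → ¬ bp π m

def sindec {n : ℕ} (π : Perm (Fin n)) : Prop := ∀ m, 1 ≤ m → m < n → ¬ bp (revp n * π) m

noncomputable def IndS (n : ℕ) : Finset (Perm (Fin n)) :=
  Finset.univ.filter (fun π => SeparablePerm π ∧ indec π)

noncomputable def SIndS (n : ℕ) : Finset (Perm (Fin n)) :=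
  Finset.univ.filter (fun π => SeparablePerm π ∧ sindec π)

noncomputable def mbp {n : ℕ} (π : Perm (Fin n)) : ℕ :=
  if h : ∃ m, 1 ≤ m ∧ m < n ∧ bp π m then Nat.find h else n

lemma mbp_le {n : ℕ} (π : Perm (Fin n)) : mbp π ≤ n := by
  rw [mbp]; split_ifs with h
  · have := Nat.find_spec h; omega
  · omega

lemma mbp_pos {n : ℕ} (hn : 1 ≤ n) (π : Perm (Fin n)) : 1 ≤ mbp π := by
  rw [mbp]; split_ifs with h
  · exact (Nat.find_spec h).1
  · omega

lemma mbp_eq_n_iff {n : ℕ} (π : Perm (Fin n)) : mbp π = n ↔ indec π := by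
  rw [mbp]; split_ifs with h
  · have hs := Nat.find_spec h
    constructor
    · intro he; omega
    · intro hi; exact absurd hs.2.2 (hi _ hs.1 hs.2.1)
  · push_neg at h
    exact ⟨fun _ m h1 h2 => h m h1 h2, fun _ => rfl⟩

lemma mbp_eq_iff {n j : ℕ} (π : Perm (Fin n)) (hj1 : 1 ≤ j) (hjn : j < n) :
    mbp π = j ↔ (bp π j ∧ ∀ m', 1 ≤ m' → m' < j → ¬ bp π m') := by
  rw [mbp]; split_ifs with h
  · rw [Nat.find_eq_iff h]
    constructor
    · rintro ⟨⟨-, -, hb⟩, hmin⟩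
      refine ⟨hb, fun m' h1 h2 => fun hc => hmin m' h2 ⟨h1, by omega, hc⟩⟩
    · rintro ⟨hb, hmin⟩
      refine ⟨⟨hj1, hjn, hb⟩, fun m hm => ?_⟩
      rintro ⟨h1, h2, hc⟩
      exact hmin m h1 hm hc
  · push_neg at h
    constructor
    · intro hc; omega
    · rintro ⟨hb, -⟩
      exact absurd hb (h j hj1 hjn)

variable {R : Type*} [CommRing R]

lemma count_L (w : ℕ → R) (n : ℕ) (hn : 1 ≤ n) :
    ∑ π ∈ SepS n, w (desv π) =
      (∑ π ∈ IndS n, w (desv π)) +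
      ∑ m ∈ Finset.Ico 1 n, ∑ σ ∈ IndS m, ∑ τ ∈ SepS (n - m), w (desv σ + desv τ) := by
  have hmaps : ∀ π ∈ SepS n, mbp π ∈ range (n + 1) := by
    intro π _
    simp only [Finset.mem_range]
    have := mbp_le π; omega
  rw [← Finset.sum_fiberwise_of_maps_to hmaps]
  have hsplit : range (n + 1) = insert n (insert 0 (Finset.Ico 1 n)) := by
    ext i; simp [Finset.mem_Ico]; omega
  rw [hsplit, Finset.sum_insert (by simp [Finset.mem_Ico]; omega),
    Finset.sum_insert (by simp [Finset.mem_Ico])]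
  have hfn : (SepS n).filter (fun π => mbp π = n) = IndS n := by
    ext π
    simp only [SepS, IndS, Finset.mem_filter, Finset.mem_univ, true_and]
    exact and_congr_right (fun _ => mbp_eq_n_iff π)
  have hf0 : (∑ π ∈ (SepS n).filter (fun π => mbp π = 0), w (desv π)) = 0 := by
    rw [Finset.filter_false_of_mem, Finset.sum_empty]
    intro π _
    have := mbp_pos hn π; omega
  rw [hfn, hf0, zero_add]
  congr 1
  apply Finset.sum_congr rfl
  intro j hj
  simp only [Finset.mem_Ico] at hj
  obtain ⟨hj1, hjn⟩ := hj
  have hjle : j ≤ n := by omega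
  rw [← Finset.sum_product']
  have key : ∀ π ∈ (SepS n).filter (fun π => mbp π = j), bp π j := by
    intro π hπ
    have := (Finset.mem_filter.mp hπ).2
    exact ((mbp_eq_iff π hj1 hjn).mp this).1
  have keysep : ∀ π ∈ (SepS n).filter (fun π => mbp π = j), SeparablePerm π := by
    intro π hπ
    have := (Finset.mem_filter.mp hπ).1
    exact (Finset.mem_filter.mp this).2
  have keymin : ∀ π ∈ (SepS n).filter (fun π => mbp π = j),
      ∀ m', 1 ≤ m' → m' < j → ¬ bp π m' := by
    intro π hπ
    have := (Finset.mem_filter.mp hπ).2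
    exact ((mbp_eq_iff π hj1 hjn).mp this).2
  refine Finset.sum_bij'
    (fun π hπ => (leftp π j hjle (key π hπ), rightp π j hjle (key π hπ)))
    (fun p _ => dsumC hjle p.1 p.2) ?_ ?_ ?_ ?_ ?_
  · intro π hπ
    rw [Finset.mem_product]
    have hher := sep_hered (keysep π hπ) j hj1 hjn hjle (key π hπ)
    constructor
    · simp only [IndS, Finset.mem_filter, Finset.mem_univ, true_and]
      refine ⟨hher.1, fun m' h1 h2 hc => ?_⟩
      exact keymin π hπ m' h1 h2 (bp_of_bp_leftp π hjle (key π hπ) (by omega) hc)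
    · simp only [SepS, Finset.mem_filter, Finset.mem_univ, true_and]
      exact hher.2
  · intro p hp
    rw [Finset.mem_product] at hp
    obtain ⟨hp1, hp2⟩ := hp
    simp only [IndS, Finset.mem_filter, Finset.mem_univ, true_and] at hp1
    simp only [SepS, Finset.mem_filter, Finset.mem_univ, true_and] at hp2
    rw [Finset.mem_filter]
    constructor
    · simp only [SepS, Finset.mem_filter, Finset.mem_univ, true_and]
      exact sep_dsumC hjle hp1.1 hp2
    · rw [mbp_eq_iff _ hj1 hjn]
      refine ⟨bp_dsumC hjle p.1 p.2, fun m' h1 h2 hc => ?_⟩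
      have := bp_leftp (dsumC hjle p.1 p.2) hjle (bp_dsumC hjle p.1 p.2) (by omega) hc
      rw [leftp_dsumC] at this
      exact hp1.2 m' h1 (by omega) this
  · intro π hπ
    exact dsumC_recompose π hjle (key π hπ)
  · intro p hp
    exact Prod.ext (leftp_dsumC hjle p.1 p.2 (bp_dsumC hjle p.1 p.2))
      (rightp_dsumC hjle p.1 p.2 (bp_dsumC hjle p.1 p.2))
  · intro π hπ
    have : desv π = desv (leftp π j hjle (key π hπ)) + desv (rightp π j hjle (key π hπ)) := by
      conv_lhs => rw [← dsumC_recompose π hjle (key π hπ)]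
      exact desv_dsumC hj1 hjn _ _
    rw [this]

lemma sum_rev {n : ℕ} (f : Perm (Fin n) → R) :
    ∑ π ∈ SepS n, f π = ∑ π ∈ SepS n, f (revp n * π) := by
  refine Finset.sum_bij' (fun π _ => revp n * π) (fun π _ => revp n * π) ?_ ?_ ?_ ?_ ?_
  · intro π hπ
    simp only [SepS, Finset.mem_filter, Finset.mem_univ, true_and] at hπ ⊢
    exact sep_rev hπ
  · intro π hπ
    simp only [SepS, Finset.mem_filter, Finset.mem_univ, true_and] at hπ ⊢
    exact sep_rev hπ
  · intro π _; exact rev_rev π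
  · intro π _; exact rev_rev π
  · intro π _
    show f π = f (revp n * (revp n * π))
    rw [rev_rev]

lemma sum_rev_ind {n : ℕ} (f : Perm (Fin n) → R) :
    ∑ π ∈ IndS n, f π = ∑ π ∈ SIndS n, f (revp n * π) := by
  refine Finset.sum_bij' (fun π _ => revp n * π) (fun π _ => revp n * π) ?_ ?_ ?_ ?_ ?_
  · intro π hπ
    simp only [IndS, SIndS, Finset.mem_filter, Finset.mem_univ, true_and] at hπ ⊢
    refine ⟨sep_rev hπ.1, fun m h1 h2 hc => ?_⟩
    rw [rev_rev] at hc
    exact hπ.2 m h1 h2 hc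
  · intro π hπ
    simp only [IndS, SIndS, Finset.mem_filter, Finset.mem_univ, true_and] at hπ ⊢
    exact ⟨sep_rev hπ.1, fun m h1 h2 hc => hπ.2 m h1 h2 hc⟩
  · intro π _; exact rev_rev π
  · intro π _; exact rev_rev π
  · intro π _
    show f π = f (revp n * (revp n * π))
    rw [rev_rev]

lemma count_L' (w : ℕ → R) (n : ℕ) (hn : 1 ≤ n) :
    ∑ π ∈ SepS n, w (desv π) =
      (∑ π ∈ SIndS n, w (desv π)) +
      ∑ m ∈ Finset.Ico 1 n, ∑ σ ∈ SIndS m, ∑ τ ∈ SepS (n - m), w (desv σ + desv τ + 1) := by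
  have hS : ∀ j : ℕ, 1 ≤ j → ∀ π ∈ SepS j, desv π ≤ j - 1 := fun j _ π _ => desv_le π
  -- step 1: reverse
  have step1 : ∑ π ∈ SepS n, w (desv π) = ∑ π ∈ SepS n, w (n - 1 - desv π) := by
    rw [sum_rev (fun π => w (n - 1 - desv π))]
    apply Finset.sum_congr rfl
    intro π _
    rw [desv_rev]
    congr 1
    have := desv_le π
    omega
  rw [step1, count_L (fun d => w (n - 1 - d)) n hn]
  congr 1
  · rw [sum_rev_ind (fun π => w (n - 1 - desv π))]
    apply Finset.sum_congr rfl
    intro π _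
    rw [desv_rev]
    congr 1
    have := desv_le π
    omega
  · apply Finset.sum_congr rfl
    intro m hm
    simp only [Finset.mem_Ico] at hm
    rw [sum_rev_ind (fun σ => ∑ τ ∈ SepS (n - m), w (n - 1 - (desv σ + desv τ)))]
    apply Finset.sum_congr rfl
    intro σ _
    rw [sum_rev (fun τ => w (n - 1 - (desv (revp m * σ) + desv τ)))]
    apply Finset.sum_congr rfl
    intro τ hτ
    rw [desv_rev, desv_rev]
    congr 1
    have h1 := desv_le σ
    have h2 := desv_le τ
    omega

end Counting

/-! ### descent polynomials and the master recurrence -/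

section Poly
open scoped Classical
variable {R : Type*} [CommRing R]

noncomputable def Spoly (x : R) (n : ℕ) : R := ∑ π ∈ SepS n, x ^ desv π
noncomputable def Gpoly (x : R) (n : ℕ) : R := ∑ π ∈ IndS n, x ^ desv π
noncomputable def Hpoly (x : R) (n : ℕ) : R := ∑ π ∈ SIndS n, x ^ desv π

lemma SepS_zero : SepS 0 = ∅ := by
  ext π
  simp only [SepS, Finset.mem_filter, Finset.mem_univ, true_and, Finset.notMem_empty,
    iff_false]
  intro hs
  have := hs.one_le
  omega

lemma Spoly_zero (x : R) : Spoly x 0 = 0 := by rw [Spoly, SepS_zero, Finset.sum_empty]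

lemma Gpoly_zero (x : R) : Gpoly x 0 = 0 := by
  rw [Gpoly]
  rw [Finset.sum_eq_zero]
  intro π hπ
  simp only [IndS, Finset.mem_filter] at hπ
  have := hπ.2.1.one_le
  omega

lemma Hpoly_zero (x : R) : Hpoly x 0 = 0 := by
  rw [Hpoly]
  rw [Finset.sum_eq_zero]
  intro π hπ
  simp only [SIndS, Finset.mem_filter] at hπ
  have := hπ.2.1.one_le
  omega

lemma perm_fin_one (π : Perm (Fin 1)) : π = 1 := by
  apply perm_ext_pv
  intro i hi
  have h1 := pv_lt π hi
  have h2 := pv_lt (1 : Perm (Fin 1)) hi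
  omega

lemma desv_fin_one (π : Perm (Fin 1)) : desv π = 0 := by
  rw [desv]
  simp

lemma SepS_one : SepS 1 = {(1 : Perm (Fin 1))} := by
  ext π
  simp only [SepS, Finset.mem_filter, Finset.mem_univ, true_and, Finset.mem_singleton]
  constructor
  · intro _; exact perm_fin_one π
  · intro h; rw [h]; exact SeparablePerm.one

lemma IndS_one : IndS 1 = {(1 : Perm (Fin 1))} := by
  ext π
  simp only [IndS, Finset.mem_filter, Finset.mem_univ, true_and, Finset.mem_singleton]
  constructor
  · intro h; exact perm_fin_one π
  · intro h
    refine ⟨by rw [h]; exact SeparablePerm.one, fun m h1 h2 => by omega⟩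

lemma Spoly_one (x : R) : Spoly x 1 = 1 := by
  rw [Spoly, SepS_one, Finset.sum_singleton, desv_fin_one, pow_zero]

lemma Gpoly_one (x : R) : Gpoly x 1 = 1 := by
  rw [Gpoly, IndS_one, Finset.sum_singleton, desv_fin_one, pow_zero]

lemma E1 (x : R) (n : ℕ) (hn : 1 ≤ n) :
    Spoly x n = Gpoly x n + ∑ m ∈ Finset.Ico 1 n, Gpoly x m * Spoly x (n - m) := by
  rw [Spoly, count_L (fun d => x ^ d) n hn]
  congr 1
  apply Finset.sum_congr rfl
  intro m _
  rw [Gpoly, Spoly, Finset.sum_mul_sum]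
  apply Finset.sum_congr rfl
  intro σ _
  apply Finset.sum_congr rfl
  intro τ _
  rw [pow_add]

lemma E2 (x : R) (n : ℕ) (hn : 1 ≤ n) :
    Spoly x n = Hpoly x n + x * ∑ m ∈ Finset.Ico 1 n, Hpoly x m * Spoly x (n - m) := by
  rw [Spoly, count_L' (fun d => x ^ d) n hn]
  congr 1
  rw [Finset.mul_sum]
  apply Finset.sum_congr rfl
  intro m _
  rw [Hpoly, Spoly, Finset.sum_mul_sum]
  rw [Finset.mul_sum]
  apply Finset.sum_congr rfl
  intro σ _
  rw [Finset.mul_sum]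
  apply Finset.sum_congr rfl
  intro τ _
  rw [pow_add, pow_add, pow_one]
  ring

lemma SIndS_eq_filter (n : ℕ) : SIndS n = (SepS n).filter (fun π => sindec π) := by
  ext π
  simp only [SIndS, SepS, Finset.mem_filter, Finset.mem_univ, true_and, and_assoc]

lemma IndS_eq_filter_not (n : ℕ) (hn : 2 ≤ n) :
    IndS n = (SepS n).filter (fun π => ¬ sindec π) := by
  ext π
  simp only [IndS, SepS, Finset.mem_filter, Finset.mem_univ, true_and]
  constructor
  · rintro ⟨hs, hind⟩
    refine ⟨hs, fun hsind => ?_⟩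
    rcases sep_cover hs hn with ⟨m, h1, h2, hb⟩ | ⟨m, h1, h2, hb⟩
    · exact hind m h1 h2 hb
    · exact hsind m h1 h2 hb
  · rintro ⟨hs, hnsind⟩
    refine ⟨hs, fun m h1 h2 hb => ?_⟩
    rw [sindec] at hnsind
    push_neg at hnsind
    obtain ⟨m', h1', h2', hb'⟩ := hnsind
    exact bp_exclusive π h1 h2 h1' h2' hb hb'

lemma E3 (x : R) (n : ℕ) (hn : 2 ≤ n) :
    Gpoly x n = x * ∑ m ∈ Finset.Ico 1 n, Hpoly x m * Spoly x (n - m) := by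
  have hpart := Finset.sum_filter_add_sum_filter_not (SepS n) (fun π => sindec π)
    (fun π => x ^ desv π)
  have hE2 := E2 x n (by omega)
  rw [Spoly] at hE2
  rw [← hpart] at hE2
  rw [← SIndS_eq_filter] at hE2
  rw [← Hpoly] at hE2
  have : (∑ π ∈ (SepS n).filter (fun π => ¬ sindec π), x ^ desv π) =
      x * ∑ m ∈ Finset.Ico 1 n, Hpoly x m * Spoly x (n - m) := by
    exact add_left_cancel hE2
  rw [Gpoly, IndS_eq_filter_not n hn, this]

lemma sum_antidiag_delta_right (f : ℕ → R) (n : ℕ) :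
    ∑ p ∈ Finset.HasAntidiagonal.antidiagonal n, f p.1 * (if p.2 = 0 then (1:R) else 0) = f n := by
  rw [Finset.sum_eq_single (n, 0)]
  · simp
  · intro p hp hne
    simp only [Finset.HasAntidiagonal.mem_antidiagonal] at hp
    rw [if_neg, mul_zero]
    intro hc
    exact hne (by rw [Prod.ext_iff]; constructor <;> simp <;> omega)
  · intro hc
    exact absurd (Finset.HasAntidiagonal.mem_antidiagonal.mpr (by omega)) hc

lemma sum_antidiag_delta_left (g : ℕ → R) (n : ℕ) :
    ∑ p ∈ Finset.HasAntidiagonal.antidiagonal n, (if p.1 = 0 then (1:R) else 0) * g p.2 = g n := by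
  rw [Finset.sum_eq_single (0, n)]
  · simp
  · intro p hp hne
    simp only [Finset.HasAntidiagonal.mem_antidiagonal] at hp
    rw [if_neg, zero_mul]
    intro hc
    exact hne (by rw [Prod.ext_iff]; constructor <;> simp <;> omega)
  · intro hc
    exact absurd (Finset.HasAntidiagonal.mem_antidiagonal.mpr (by omega)) hc

lemma sum_antidiag_delta_both (n : ℕ) :
    ∑ p ∈ Finset.HasAntidiagonal.antidiagonal n, (if p.1 = 0 then (1:R) else 0) * (if p.2 = 0 then (1:R) else 0)
      = if n = 0 then (1:R) else 0 := by
  rw [Finset.sum_eq_single (0, n)]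
  · simp
  · intro p hp hne
    simp only [Finset.HasAntidiagonal.mem_antidiagonal] at hp
    rw [if_neg, zero_mul]
    intro hc
    exact hne (by rw [Prod.ext_iff]; constructor <;> simp <;> omega)
  · intro hc
    exact absurd (Finset.HasAntidiagonal.mem_antidiagonal.mpr (by omega)) hc

lemma conv_Ico {f g : ℕ → R} (hf0 : f 0 = 0) (hg0 : g 0 = 0) (n : ℕ) :
    ∑ p ∈ Finset.HasAntidiagonal.antidiagonal n, f p.1 * g p.2 = ∑ m ∈ Finset.Ico 1 n, f m * g (n - m) := by
  rw [Finset.Nat.sum_antidiagonal_eq_sum_range_succ_mk]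
  rcases Nat.eq_zero_or_pos n with h | h
  · subst h; simp [hf0]
  · have hsplit : range (n + 1) = insert 0 (insert n (Finset.Ico 1 n)) := by
      ext i; simp [Finset.mem_Ico]; omega
    rw [hsplit, Finset.sum_insert (by simp [Finset.mem_Ico]; omega),
      Finset.sum_insert (by simp [Finset.mem_Ico])]
    rw [hf0, zero_mul, Nat.sub_self, hg0, mul_zero, zero_add, zero_add]

lemma master (x : R) (n : ℕ) (hn : 1 ≤ n) :
    Spoly x n = (if n = 1 then 1 else 0) + (1 + x) * Spoly x (n - 1)
      + x * (∑ p ∈ Finset.HasAntidiagonal.antidiagonal (n - 1), Spoly x p.1 * Spoly x p.2)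
      + x * (∑ p ∈ Finset.HasAntidiagonal.antidiagonal n,
          Spoly x p.1 * (∑ q ∈ Finset.HasAntidiagonal.antidiagonal p.2, Spoly x q.1 * Spoly x q.2)) := by
  set F := PowerSeries.mk (fun m => Spoly x m) with hFdef
  set G := PowerSeries.mk (fun m => Gpoly x m) with hGdef
  set H := PowerSeries.mk (fun m => Hpoly x m) with hHdef
  have e1 : F = G * (1 + F) := by
    apply PowerSeries.ext
    intro m
    rw [PowerSeries.coeff_mul]
    simp only [map_add, PowerSeries.coeff_mk, PowerSeries.coeff_one, hFdef, hGdef]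
    have hsp : ∀ p ∈ Finset.HasAntidiagonal.antidiagonal m,
        Gpoly x p.1 * ((if p.2 = 0 then (1:R) else 0) + Spoly x p.2)
          = Gpoly x p.1 * (if p.2 = 0 then (1:R) else 0) + Gpoly x p.1 * Spoly x p.2 :=
      fun p _ => mul_add _ _ _
    rw [Finset.sum_congr rfl hsp, Finset.sum_add_distrib, sum_antidiag_delta_right,
      conv_Ico (Gpoly_zero x) (Spoly_zero x)]
    rcases Nat.eq_zero_or_pos m with h | h
    · subst h; simp [Spoly_zero, Gpoly_zero]
    · exact E1 x m h
  have e2 : F = H * (1 + (PowerSeries.C x) * F) := by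
    apply PowerSeries.ext
    intro m
    rw [PowerSeries.coeff_mul]
    simp only [map_add, PowerSeries.coeff_mk, PowerSeries.coeff_one,
      PowerSeries.coeff_C_mul, hFdef, hHdef]
    have hsp : ∀ p ∈ Finset.HasAntidiagonal.antidiagonal m,
        Hpoly x p.1 * ((if p.2 = 0 then (1:R) else 0) + x * Spoly x p.2)
          = Hpoly x p.1 * (if p.2 = 0 then (1:R) else 0) + x * (Hpoly x p.1 * Spoly x p.2) :=
      fun p _ => by ring
    rw [Finset.sum_congr rfl hsp, Finset.sum_add_distrib, sum_antidiag_delta_right,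
      ← Finset.mul_sum, conv_Ico (Hpoly_zero x) (Spoly_zero x)]
    rcases Nat.eq_zero_or_pos m with h | h
    · subst h; simp [Spoly_zero, Hpoly_zero]
    · exact E2 x m h
  have e3 : G = PowerSeries.X + (PowerSeries.C x) * (H * F) := by
    apply PowerSeries.ext
    intro m
    rw [map_add, PowerSeries.coeff_X, PowerSeries.coeff_C_mul, PowerSeries.coeff_mul]
    simp only [PowerSeries.coeff_mk, hFdef, hGdef, hHdef]
    rw [conv_Ico (Hpoly_zero x) (Spoly_zero x)]
    rcases Nat.lt_or_ge m 2 with h | h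
    · interval_cases m
      · simp [Gpoly_zero]
      · simp [Gpoly_one]
    · rw [if_neg (by omega), zero_add]
      exact E3 x m h
  have key : F = PowerSeries.X * ((1 + F) * (1 + (PowerSeries.C x) * F))
      + (PowerSeries.C x) * (F * (F * F)) := by
    have e13 : F = (PowerSeries.X + (PowerSeries.C x) * (H * F)) * (1 + F) := by
      rw [← e3]; exact e1
    linear_combination (1 + (PowerSeries.C x) * F) * e13
      - ((PowerSeries.C x) * F * (1 + F)) * e2
  obtain ⟨n', rfl⟩ : ∃ n', n = n' + 1 := ⟨n - 1, by omega⟩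
  have hc := congrArg (PowerSeries.coeff (n' + 1)) key
  rw [map_add, PowerSeries.coeff_succ_X_mul, PowerSeries.coeff_C_mul,
    PowerSeries.coeff_mk] at hc
  have hA : (PowerSeries.coeff n') ((1 + F) * (1 + (PowerSeries.C x) * F))
      = (if n' = 0 then (1:R) else 0) + (1 + x) * Spoly x n'
        + x * (∑ p ∈ Finset.HasAntidiagonal.antidiagonal n', Spoly x p.1 * Spoly x p.2) := by
    rw [PowerSeries.coeff_mul]
    simp only [map_add, PowerSeries.coeff_one, PowerSeries.coeff_C_mul,
      PowerSeries.coeff_mk, hFdef]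
    have hsp : ∀ p ∈ Finset.HasAntidiagonal.antidiagonal n',
        ((if p.1 = 0 then (1:R) else 0) + Spoly x p.1)
          * ((if p.2 = 0 then (1:R) else 0) + x * Spoly x p.2)
        = (if p.1 = 0 then (1:R) else 0) * (if p.2 = 0 then (1:R) else 0)
          + (if p.1 = 0 then (1:R) else 0) * (x * Spoly x p.2)
          + Spoly x p.1 * (if p.2 = 0 then (1:R) else 0)
          + x * (Spoly x p.1 * Spoly x p.2) := fun p _ => by ring
    have d1 := sum_antidiag_delta_left (R := R) (fun t => x * Spoly x t) n'
    have d2 := sum_antidiag_delta_right (R := R) (fun t => Spoly x t) n'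
    rw [Finset.sum_congr rfl hsp, Finset.sum_add_distrib, Finset.sum_add_distrib,
      Finset.sum_add_distrib, sum_antidiag_delta_both, d1, d2, ← Finset.mul_sum]
    ring
  have hB : (PowerSeries.coeff (n' + 1)) (F * (F * F))
      = ∑ p ∈ Finset.HasAntidiagonal.antidiagonal (n' + 1),
          Spoly x p.1 * (∑ q ∈ Finset.HasAntidiagonal.antidiagonal p.2, Spoly x q.1 * Spoly x q.2) := by
    rw [PowerSeries.coeff_mul]
    apply Finset.sum_congr rfl
    intro p _
    rw [PowerSeries.coeff_mul]
    simp only [PowerSeries.coeff_mk, hFdef]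
  rw [hA, hB] at hc
  have hif : (if n' + 1 = 1 then (1:R) else 0) = (if n' = 0 then (1:R) else 0) := by
    by_cases h : n' = 0 <;> simp [h]
  rw [hif]
  simpa [Nat.add_sub_cancel] using hc

end Poly

/-! ### the gamma coefficients -/

def γf : ℕ → ℕ → ℕ
  | 0, _ => 0
  | 1, k => if k = 0 then 1 else 0
  | (N+2), k =>
    γf (N+1) k +
    (match k with
     | 0 => 0
     | (k'+1) =>
       (∑ p ∈ (Finset.HasAntidiagonal.antidiagonal (N+1)).attach, ∑ q ∈ Finset.HasAntidiagonal.antidiagonal k',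
         γf p.1.1 q.1 * γf p.1.2 q.2) +
       ∑ i ∈ (Finset.Ico 1 (N+1)).attach, ∑ p ∈ (Finset.HasAntidiagonal.antidiagonal (N+2-i.1)).attach,
         ∑ q ∈ Finset.HasAntidiagonal.antidiagonal k', ∑ r ∈ Finset.HasAntidiagonal.antidiagonal q.2,
           γf i.1 q.1 * (γf p.1.1 r.1 * γf p.1.2 r.2))
  termination_by n _ => n
  decreasing_by
  · omega
  · have := Finset.HasAntidiagonal.mem_antidiagonal.mp p.2; omega
  · have := Finset.HasAntidiagonal.mem_antidiagonal.mp p.2; omega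
  · have := Finset.mem_Ico.mp i.2; omega
  · have hi := Finset.mem_Ico.mp i.2
    have := Finset.HasAntidiagonal.mem_antidiagonal.mp p.2; omega
  · have hi := Finset.mem_Ico.mp i.2
    have := Finset.HasAntidiagonal.mem_antidiagonal.mp p.2; omega

def pairγ (N k' : ℕ) : ℕ :=
  ∑ p ∈ Finset.HasAntidiagonal.antidiagonal (N+1), ∑ q ∈ Finset.HasAntidiagonal.antidiagonal k',
    γf p.1 q.1 * γf p.2 q.2

def tripγ (N k' : ℕ) : ℕ :=
  ∑ i ∈ Finset.Ico 1 (N+1), ∑ p ∈ Finset.HasAntidiagonal.antidiagonal (N+2-i),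
    ∑ q ∈ Finset.HasAntidiagonal.antidiagonal k', ∑ r ∈ Finset.HasAntidiagonal.antidiagonal q.2,
      γf i q.1 * (γf p.1 r.1 * γf p.2 r.2)

lemma γf_zero (k : ℕ) : γf 0 k = 0 := by rw [γf]

lemma γf_one (k : ℕ) : γf 1 k = if k = 0 then 1 else 0 := by rw [γf]

lemma γf_succ_zero (N : ℕ) : γf (N+2) 0 = γf (N+1) 0 := by rw [γf]; omega

lemma γf_succ_succ (N k' : ℕ) :
    γf (N+2) (k'+1) = γf (N+1) (k'+1) + (pairγ N k' + tripγ N k') := by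
  rw [γf]
  congr 1
  show _ = pairγ N k' + tripγ N k'
  congr 1
  · rw [pairγ, ← Finset.sum_attach (Finset.HasAntidiagonal.antidiagonal (N+1))]
  · rw [tripγ, ← Finset.sum_attach (Finset.Ico 1 (N+1))]
    apply Finset.sum_congr rfl
    intro i _
    rw [← Finset.sum_attach (Finset.HasAntidiagonal.antidiagonal (N+2-i.1))]

lemma γf_supp : ∀ n k : ℕ, n ≤ 2 * k → γf n k = 0 := by
  intro n
  induction n using Nat.strong_induction_on with
  | _ n IH =>
    match n with
    | 0 => intro k _; exact γf_zero k
    | 1 =>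
      intro k h
      rw [γf_one, if_neg (by omega)]
    | (N+2) =>
      intro k h
      match k with
      | 0 => omega
      | (k'+1) =>
        rw [γf_succ_succ]
        have h1 : γf (N+1) (k'+1) = 0 := IH (N+1) (by omega) _ (by omega)
        have h2 : pairγ N k' = 0 := by
          apply Finset.sum_eq_zero
          intro p hp
          apply Finset.sum_eq_zero
          intro q hq
          rw [Finset.HasAntidiagonal.mem_antidiagonal] at hp hq
          rcases le_or_gt p.1 (2 * q.1) with hc | hc
          · rw [IH p.1 (by omega) q.1 hc, zero_mul]
          · rcases le_or_gt p.2 (2 * q.2) with hc2 | hc2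
            · rw [IH p.2 (by omega) q.2 hc2, mul_zero]
            · omega
        have h3 : tripγ N k' = 0 := by
          apply Finset.sum_eq_zero
          intro i hi
          apply Finset.sum_eq_zero
          intro p hp
          apply Finset.sum_eq_zero
          intro q hq
          apply Finset.sum_eq_zero
          intro r hr
          rw [Finset.mem_Ico] at hi
          rw [Finset.HasAntidiagonal.mem_antidiagonal] at hp hq hr
          rcases le_or_gt i (2 * q.1) with hc | hc
          · rw [IH i (by omega) q.1 hc, zero_mul]
          · rcases le_or_gt p.1 (2 * r.1) with hc2 | hc2
            · rw [IH p.1 (by omega) r.1 hc2, zero_mul, mul_zero]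
            · rcases le_or_gt p.2 (2 * r.2) with hc3 | hc3
              · rw [IH p.2 (by omega) r.2 hc3, mul_zero, mul_zero]
              · omega
        rw [h1, h2, h3]

lemma γf_supp' {n k : ℕ} (h : n ≤ k) : γf n k = 0 := γf_supp n k (by omega)

section GammaAlg
variable {R : Type*} [CommRing R]

lemma sum_grid {M : ℕ} (h : ℕ → ℕ → R) (hvan : ∀ a b, M ≤ a + b → h a b = 0) :
    ∑ a ∈ range M, ∑ b ∈ range M, h a b
      = ∑ k ∈ range M, ∑ q ∈ Finset.HasAntidiagonal.antidiagonal k, h q.1 q.2 := by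
  classical
  rw [← Finset.sum_product']
  rw [← Finset.sum_filter_add_sum_filter_not (range M ×ˢ range M)
    (fun p => p.1 + p.2 < M) (fun p => h p.1 p.2)]
  have hzero : ∑ p ∈ (range M ×ˢ range M).filter (fun p => ¬ p.1 + p.2 < M),
      h p.1 p.2 = 0 := by
    apply Finset.sum_eq_zero
    intro p hp
    simp only [Finset.mem_filter] at hp
    exact hvan p.1 p.2 (by omega)
  rw [hzero, add_zero]
  rw [Finset.sum_sigma']
  refine Finset.sum_bij' (fun p _ => (⟨p.1 + p.2, p⟩ : (_ : ℕ) × ℕ × ℕ))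
    (fun x _ => x.2) ?_ ?_ ?_ ?_ ?_
  · intro p hp
    simp only [Finset.mem_filter, Finset.mem_product, Finset.mem_range] at hp
    rw [Finset.mem_sigma]
    refine ⟨Finset.mem_range.mpr ?_, Finset.HasAntidiagonal.mem_antidiagonal.mpr rfl⟩
    show p.1 + p.2 < M
    omega
  · intro x hx
    rw [Finset.mem_sigma] at hx
    obtain ⟨h1, h2⟩ := hx
    rw [Finset.HasAntidiagonal.mem_antidiagonal] at h2
    simp only [Finset.mem_filter, Finset.mem_product, Finset.mem_range] at *
    omega
  · intro p hp
    rfl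
  · intro x hx
    rw [Finset.mem_sigma] at hx
    have h2 := Finset.HasAntidiagonal.mem_antidiagonal.mp hx.2
    exact Sigma.ext (by simp [h2]) (by simp)
  · intro p hp
    rfl

lemma sum_grid3 {M : ℕ} (h : ℕ → ℕ → ℕ → R) (hvan : ∀ a b c, M ≤ a + b + c → h a b c = 0) :
    ∑ a ∈ range M, ∑ b ∈ range M, ∑ c ∈ range M, h a b c
      = ∑ k ∈ range M, ∑ q ∈ Finset.HasAntidiagonal.antidiagonal k,
          ∑ r ∈ Finset.HasAntidiagonal.antidiagonal q.2, h q.1 r.1 r.2 := by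
  have step1 : ∀ a, ∑ b ∈ range M, ∑ c ∈ range M, h a b c
      = ∑ l ∈ range M, ∑ r ∈ Finset.HasAntidiagonal.antidiagonal l, h a r.1 r.2 := by
    intro a
    exact sum_grid (fun b c => h a b c) (fun b c hbc => by
      rcases le_or_gt M (a + b + c) with hc | hc
      · exact hvan a b c hc
      · omega)
  rw [Finset.sum_congr rfl (fun a _ => step1 a)]
  exact sum_grid (fun a l => ∑ r ∈ Finset.HasAntidiagonal.antidiagonal l, h a r.1 r.2)
    (fun a l hal => Finset.sum_eq_zero (fun r hr => by
      rw [Finset.HasAntidiagonal.mem_antidiagonal] at hr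
      exact hvan a r.1 r.2 (by omega)))

lemma master_unique (x : R) (f g : ℕ → R) (hf0 : f 0 = 0) (hg0 : g 0 = 0)
    (hf : ∀ n, 1 ≤ n → f n = (if n = 1 then 1 else 0) + (1 + x) * f (n - 1)
      + x * (∑ p ∈ Finset.HasAntidiagonal.antidiagonal (n - 1), f p.1 * f p.2)
      + x * (∑ p ∈ Finset.HasAntidiagonal.antidiagonal n,
          f p.1 * (∑ q ∈ Finset.HasAntidiagonal.antidiagonal p.2, f q.1 * f q.2)))
    (hg : ∀ n, 1 ≤ n → g n = (if n = 1 then 1 else 0) + (1 + x) * g (n - 1)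
      + x * (∑ p ∈ Finset.HasAntidiagonal.antidiagonal (n - 1), g p.1 * g p.2)
      + x * (∑ p ∈ Finset.HasAntidiagonal.antidiagonal n,
          g p.1 * (∑ q ∈ Finset.HasAntidiagonal.antidiagonal p.2, g q.1 * g q.2))) :
    ∀ n, f n = g n := by
  intro n
  induction n using Nat.strong_induction_on with
  | _ n IH =>
    rcases Nat.eq_zero_or_pos n with h | h
    · subst h; rw [hf0, hg0]
    · rw [hf n h, hg n h]
      congr 1
      · congr 1
        · congr 2
          exact IH (n-1) (by omega)
        · congr 1
          apply Finset.sum_congr rfl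
          intro p hp
          rw [Finset.HasAntidiagonal.mem_antidiagonal] at hp
          rw [IH p.1 (by omega), IH p.2 (by omega)]
      · congr 1
        apply Finset.sum_congr rfl
        intro p hp
        rw [Finset.HasAntidiagonal.mem_antidiagonal] at hp
        rcases Nat.eq_zero_or_pos p.1 with h1 | h1
        · rw [h1, hf0, hg0, zero_mul, zero_mul]
        · rcases Nat.eq_zero_or_pos p.2 with h2 | h2
          · rw [h2]
            simp [hf0, hg0]
          · rw [IH p.1 (by omega)]
            congr 1
            apply Finset.sum_congr rfl
            intro q hq
            rw [Finset.HasAntidiagonal.mem_antidiagonal] at hq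
            rw [IH q.1 (by omega), IH q.2 (by omega)]

end GammaAlg

section BG
variable {R : Type*} [CommRing R]

noncomputable def Bg (x : R) (n : ℕ) : R :=
  ∑ k ∈ range n, (γf n k : R) * (x^k * (1+x)^(n-1-2*k))

lemma Bg_zero (x : R) : Bg x 0 = 0 := by simp [Bg]

lemma Bg_one (x : R) : Bg x 1 = 1 := by simp [Bg, γf_one]

lemma Bg_ext (x : R) {m M : ℕ} (h : m ≤ M) :
    Bg x m = ∑ k ∈ range M, (γf m k : R) * (x^k * (1+x)^(m-1-2*k)) := by
  apply Finset.sum_subset (Finset.range_subset_range.mpr h)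
  intro k _ hk
  rw [Finset.mem_range, not_lt] at hk
  rw [γf_supp' (by omega), Nat.cast_zero, zero_mul]

lemma γf_bound {m k : ℕ} (h : γf m k ≠ 0) : 2 * k < m := by
  by_contra hc
  exact h (γf_supp m k (by omega))

lemma term2 (x : R) {p1 p2 a b N : ℕ} (h : p1 + p2 = N + 1) :
    x * ((γf p1 a : R) * (x^a * (1+x)^(p1-1-2*a)) * ((γf p2 b : R) * (x^b * (1+x)^(p2-1-2*b))))
      = ((γf p1 a * γf p2 b : ℕ) : R) * (x^(a+b+1) * (1+x)^(N+1-2*(a+b+1))) := by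
  rcases eq_or_ne (γf p1 a) 0 with h1 | h1
  · simp [h1]
  rcases eq_or_ne (γf p2 b) 0 with h2 | h2
  · simp [h2]
  have b1 := γf_bound h1
  have b2 := γf_bound h2
  have e2 : (1+x)^(N+1-2*(a+b+1)) = (1+x)^(p1-1-2*a) * (1+x)^(p2-1-2*b) := by
    rw [← pow_add]; congr 1; omega
  push_cast
  rw [e2]
  ring

lemma term3 (x : R) {i p1 p2 a b c N : ℕ} (h : i + (p1 + p2) = N + 2) (hi : 1 ≤ i) :
    x * ((γf i a : R) * (x^a * (1+x)^(i-1-2*a)) *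
        ((γf p1 b : R) * (x^b * (1+x)^(p1-1-2*b)) * ((γf p2 c : R) * (x^c * (1+x)^(p2-1-2*c)))))
      = ((γf i a * (γf p1 b * γf p2 c) : ℕ) : R)
          * (x^(a+(b+c)+1) * (1+x)^(N+1-2*(a+(b+c)+1))) := by
  rcases eq_or_ne (γf i a) 0 with h1 | h1
  · simp [h1]
  rcases eq_or_ne (γf p1 b) 0 with h2 | h2
  · simp [h2]
  rcases eq_or_ne (γf p2 c) 0 with h3 | h3
  · simp [h3]
  have b1 := γf_bound h1
  have b2 := γf_bound h2
  have b3 := γf_bound h3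
  have e2 : (1+x)^(N+1-2*(a+(b+c)+1))
      = (1+x)^(i-1-2*a) * ((1+x)^(p1-1-2*b) * (1+x)^(p2-1-2*c)) := by
    rw [← pow_add, ← pow_add]; congr 1; omega
  push_cast
  rw [e2]
  ring

lemma pair_claim (x : R) (N : ℕ) :
    (∑ k ∈ range (N+1), (pairγ N k : R) * (x^(k+1) * (1+x)^(N+1-2*(k+1))))
      = x * ∑ p ∈ Finset.HasAntidiagonal.antidiagonal (N+1), Bg x p.1 * Bg x p.2 := by
  rw [Finset.mul_sum]
  have hper : ∀ p ∈ Finset.HasAntidiagonal.antidiagonal (N+1), x * (Bg x p.1 * Bg x p.2)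
      = ∑ k ∈ range (N+1), ∑ q ∈ Finset.HasAntidiagonal.antidiagonal k,
          ((γf p.1 q.1 * γf p.2 q.2 : ℕ) : R) * (x^(k+1) * (1+x)^(N+1-2*(k+1))) := by
    intro p hp
    rw [Finset.HasAntidiagonal.mem_antidiagonal] at hp
    rw [Bg_ext x (show p.1 ≤ N+1 by omega), Bg_ext x (show p.2 ≤ N+1 by omega),
      Finset.sum_mul_sum, Finset.mul_sum]
    have hper2 : ∀ a ∈ range (N+1),
        x * (∑ b ∈ range (N+1), (γf p.1 a : R) * (x^a * (1+x)^(p.1-1-2*a))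
            * ((γf p.2 b : R) * (x^b * (1+x)^(p.2-1-2*b))))
        = ∑ b ∈ range (N+1),
            ((γf p.1 a * γf p.2 b : ℕ) : R) * (x^(a+b+1) * (1+x)^(N+1-2*(a+b+1))) := by
      intro a _
      rw [Finset.mul_sum]
      exact Finset.sum_congr rfl (fun b _ => term2 x hp)
    rw [Finset.sum_congr rfl hper2]
    rw [sum_grid (fun a b => ((γf p.1 a * γf p.2 b : ℕ) : R)
        * (x^(a+b+1) * (1+x)^(N+1-2*(a+b+1))))]
    · apply Finset.sum_congr rfl
      intro k _
      apply Finset.sum_congr rfl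
      intro q hq
      rw [Finset.HasAntidiagonal.mem_antidiagonal] at hq
      rw [hq]
    · intro a b hab
      have : γf p.1 a = 0 ∨ γf p.2 b = 0 := by
        by_contra hc
        push_neg at hc
        have c1 := γf_bound hc.1
        have c2 := γf_bound hc.2
        omega
      rcases this with h0 | h0 <;> simp [h0]
  rw [Finset.sum_congr rfl hper]
  have hL : ∀ k ∈ range (N+1), (pairγ N k : R) * (x^(k+1) * (1+x)^(N+1-2*(k+1)))
      = ∑ p ∈ Finset.HasAntidiagonal.antidiagonal (N+1), ∑ q ∈ Finset.HasAntidiagonal.antidiagonal k,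
          ((γf p.1 q.1 * γf p.2 q.2 : ℕ) : R) * (x^(k+1) * (1+x)^(N+1-2*(k+1))) := by
    intro k _
    rw [pairγ]
    push_cast
    rw [Finset.sum_mul]
    apply Finset.sum_congr rfl
    intro p _
    rw [Finset.sum_mul]
  rw [Finset.sum_congr rfl hL]
  exact Finset.sum_comm

lemma trip_claim (x : R) (N : ℕ) :
    (∑ k ∈ range (N+1), (tripγ N k : R) * (x^(k+1) * (1+x)^(N+1-2*(k+1))))
      = x * ∑ p ∈ Finset.HasAntidiagonal.antidiagonal (N+2),
          Bg x p.1 * (∑ q ∈ Finset.HasAntidiagonal.antidiagonal p.2, Bg x q.1 * Bg x q.2) := by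
  have hW0 : (∑ q ∈ Finset.HasAntidiagonal.antidiagonal 0, Bg x q.1 * Bg x q.2) = 0 := by
    simp [Bg_zero]
  have hW1 : (∑ q ∈ Finset.HasAntidiagonal.antidiagonal 1, Bg x q.1 * Bg x q.2) = 0 := by
    rw [Finset.Nat.sum_antidiagonal_eq_sum_range_succ_mk]
    simp [Bg_zero, Finset.sum_range_succ]
  -- reindex outer antidiagonal to `Ico 1 (N+1)`
  have hout : (∑ p ∈ Finset.HasAntidiagonal.antidiagonal (N+2),
      Bg x p.1 * (∑ q ∈ Finset.HasAntidiagonal.antidiagonal p.2, Bg x q.1 * Bg x q.2))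
      = ∑ i ∈ Finset.Ico 1 (N+1),
          Bg x i * (∑ q ∈ Finset.HasAntidiagonal.antidiagonal (N+2-i), Bg x q.1 * Bg x q.2) := by
    rw [Finset.Nat.sum_antidiagonal_eq_sum_range_succ_mk]
    have hsplit : range (N+3) = insert 0 (insert (N+1) (insert (N+2) (Finset.Ico 1 (N+1)))) := by
      ext i; simp [Finset.mem_Ico]; omega
    rw [hsplit, Finset.sum_insert (by simp [Finset.mem_Ico] <;> omega),
      Finset.sum_insert (by simp [Finset.mem_Ico] <;> omega),
      Finset.sum_insert (by simp [Finset.mem_Ico] <;> omega)]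
    rw [Bg_zero, zero_mul, show N+2-(N+1) = 1 by omega, hW1, mul_zero,
      Nat.sub_self, hW0, mul_zero]
    ring
  rw [hout, Finset.mul_sum]
  have hper : ∀ i ∈ Finset.Ico 1 (N+1),
      x * (Bg x i * (∑ q ∈ Finset.HasAntidiagonal.antidiagonal (N+2-i), Bg x q.1 * Bg x q.2))
      = ∑ p ∈ Finset.HasAntidiagonal.antidiagonal (N+2-i), ∑ k ∈ range (N+1), ∑ q ∈ Finset.HasAntidiagonal.antidiagonal k,
          ∑ r ∈ Finset.HasAntidiagonal.antidiagonal q.2,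
          ((γf i q.1 * (γf p.1 r.1 * γf p.2 r.2) : ℕ) : R)
            * (x^(k+1) * (1+x)^(N+1-2*(k+1))) := by
    intro i hi
    rw [Finset.mem_Ico] at hi
    rw [Finset.mul_sum, Finset.mul_sum]
    apply Finset.sum_congr rfl
    intro p hp
    rw [Finset.HasAntidiagonal.mem_antidiagonal] at hp
    have hsum : i + (p.1 + p.2) = N + 2 := by omega
    rw [Bg_ext x (show i ≤ N+1 by omega), Bg_ext x (show p.1 ≤ N+1 by omega),
      Bg_ext x (show p.2 ≤ N+1 by omega), Finset.sum_mul_sum, Finset.sum_mul_sum,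
      Finset.mul_sum]
    have hper2 : ∀ a ∈ range (N+1),
        x * (∑ b ∈ range (N+1), (γf i a : R) * (x^a * (1+x)^(i-1-2*a))
            * (∑ c ∈ range (N+1), (γf p.1 b : R) * (x^b * (1+x)^(p.1-1-2*b))
                * ((γf p.2 c : R) * (x^c * (1+x)^(p.2-1-2*c)))))
        = ∑ b ∈ range (N+1), ∑ c ∈ range (N+1),
            ((γf i a * (γf p.1 b * γf p.2 c) : ℕ) : R)
              * (x^(a+(b+c)+1) * (1+x)^(N+1-2*(a+(b+c)+1))) := by
      intro a _
      rw [Finset.mul_sum]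
      apply Finset.sum_congr rfl
      intro b _
      rw [Finset.mul_sum, Finset.mul_sum]
      apply Finset.sum_congr rfl
      intro c _
      have ht := term3 x (i := i) (p1 := p.1) (p2 := p.2) (a := a) (b := b) (c := c)
        hsum (by omega)
      rw [← ht]
    rw [Finset.sum_congr rfl hper2]
    rw [sum_grid3 (fun a b c => ((γf i a * (γf p.1 b * γf p.2 c) : ℕ) : R)
        * (x^(a+(b+c)+1) * (1+x)^(N+1-2*(a+(b+c)+1))))]
    · apply Finset.sum_congr rfl
      intro k _
      apply Finset.sum_congr rfl
      intro q hq
      rw [Finset.HasAntidiagonal.mem_antidiagonal] at hq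
      apply Finset.sum_congr rfl
      intro r hr
      rw [Finset.HasAntidiagonal.mem_antidiagonal] at hr
      rw [show q.1 + (r.1 + r.2) = k by omega]
    · intro a b c habc
      have : γf i a = 0 ∨ (γf p.1 b = 0 ∨ γf p.2 c = 0) := by
        by_contra hc
        push_neg at hc
        have c1 := γf_bound hc.1
        have c2 := γf_bound hc.2.1
        have c3 := γf_bound hc.2.2
        omega
      rcases this with h0 | h0 | h0 <;> simp [h0]
  rw [Finset.sum_congr rfl hper]
  have hL : ∀ k ∈ range (N+1), (tripγ N k : R) * (x^(k+1) * (1+x)^(N+1-2*(k+1)))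
      = ∑ i ∈ Finset.Ico 1 (N+1), ∑ p ∈ Finset.HasAntidiagonal.antidiagonal (N+2-i),
          ∑ q ∈ Finset.HasAntidiagonal.antidiagonal k, ∑ r ∈ Finset.HasAntidiagonal.antidiagonal q.2,
          ((γf i q.1 * (γf p.1 r.1 * γf p.2 r.2) : ℕ) : R)
            * (x^(k+1) * (1+x)^(N+1-2*(k+1))) := by
    intro k _
    rw [tripγ]
    push_cast
    rw [Finset.sum_mul]
    apply Finset.sum_congr rfl
    intro i _
    rw [Finset.sum_mul]
    apply Finset.sum_congr rfl
    intro p _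
    rw [Finset.sum_mul]
    apply Finset.sum_congr rfl
    intro q _
    rw [Finset.sum_mul]
  rw [Finset.sum_congr rfl hL]
  rw [Finset.sum_comm]
  apply Finset.sum_congr rfl
  intro i _
  exact Finset.sum_comm

lemma Bmaster (x : R) (n : ℕ) (hn : 1 ≤ n) :
    Bg x n = (if n = 1 then 1 else 0) + (1 + x) * Bg x (n - 1)
      + x * (∑ p ∈ Finset.HasAntidiagonal.antidiagonal (n - 1), Bg x p.1 * Bg x p.2)
      + x * (∑ p ∈ Finset.HasAntidiagonal.antidiagonal n,
          Bg x p.1 * (∑ q ∈ Finset.HasAntidiagonal.antidiagonal p.2, Bg x q.1 * Bg x q.2)) := by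
  match n, hn with
  | 1, _ =>
    rw [Bg_one]
    simp only [Nat.sub_self, if_pos rfl]
    rw [Bg_zero]
    have h0 : (∑ p ∈ Finset.HasAntidiagonal.antidiagonal 0, Bg x p.1 * Bg x p.2) = 0 := by
      simp [Bg_zero]
    have h1 : (∑ p ∈ Finset.HasAntidiagonal.antidiagonal 1,
        Bg x p.1 * (∑ q ∈ Finset.HasAntidiagonal.antidiagonal p.2, Bg x q.1 * Bg x q.2)) = 0 := by
      rw [Finset.Nat.sum_antidiagonal_eq_sum_range_succ_mk]
      simp [Bg_zero, Finset.sum_range_succ, h0]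
    rw [h0, h1]
    norm_num
  | (N+2), _ =>
    have hexp : ∀ k, (N+2) - 1 - 2*k = N+1-2*k := fun k => by omega
    have key1 : Bg x (N+2)
        = (∑ k ∈ range (N+2), (γf (N+1) k : R) * (x^k*(1+x)^(N+1-2*k)))
        + ((∑ k ∈ range (N+1), (pairγ N k : R) * (x^(k+1)*(1+x)^(N+1-2*(k+1))))
        + (∑ k ∈ range (N+1), (tripγ N k : R) * (x^(k+1)*(1+x)^(N+1-2*(k+1))))) := by
      rw [Bg]
      simp only [hexp]
      rw [Finset.sum_range_succ' (fun k => (γf (N+2) k : R) * (x^k*(1+x)^(N+1-2*k))) (N+1)]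
      rw [Finset.sum_range_succ' (fun k => (γf (N+1) k : R) * (x^k*(1+x)^(N+1-2*k))) (N+1)]
      rw [γf_succ_zero]
      have hterm : ∀ k ∈ range (N+1),
          (γf (N+2) (k+1) : R) * (x^(k+1)*(1+x)^(N+1-2*(k+1)))
          = (γf (N+1) (k+1) : R) * (x^(k+1)*(1+x)^(N+1-2*(k+1)))
            + ((pairγ N k : R) * (x^(k+1)*(1+x)^(N+1-2*(k+1)))
              + (tripγ N k : R) * (x^(k+1)*(1+x)^(N+1-2*(k+1)))) := by
        intro k _
        rw [γf_succ_succ]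
        push_cast
        ring
      rw [Finset.sum_congr rfl hterm, Finset.sum_add_distrib, Finset.sum_add_distrib]
      ring
    have claim1 : (∑ k ∈ range (N+2), (γf (N+1) k : R) * (x^k*(1+x)^(N+1-2*k)))
        = (1+x) * Bg x (N+1) := by
      rw [Bg, Finset.mul_sum]
      have hext : (∑ k ∈ range (N+2), (γf (N+1) k : R) * (x^k*(1+x)^(N+1-2*k)))
          = ∑ k ∈ range (N+1), (γf (N+1) k : R) * (x^k*(1+x)^(N+1-2*k)) := by
        symm
        apply Finset.sum_subset (Finset.range_subset_range.mpr (by omega))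
        intro k _ hk
        rw [Finset.mem_range, not_lt] at hk
        rw [γf_supp' (by omega), Nat.cast_zero, zero_mul]
      rw [hext]
      apply Finset.sum_congr rfl
      intro k _
      rcases eq_or_ne (γf (N+1) k) 0 with h0 | h0
      · rw [h0]; simp
      · have hb := γf_bound h0
        have he1 : N+1-2*k = (N+1-1-2*k)+1 := by omega
        rw [he1, pow_succ]
        ring
    rw [key1, pair_claim, trip_claim, claim1, if_neg (by omega)]
    have hsub : N + 2 - 1 = N + 1 := by omega
    rw [hsub]
    ring

lemma Spoly_eq_Bg (x : R) (n : ℕ) : Spoly x n = Bg x n :=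
  master_unique x (Spoly x) (Bg x) (Spoly_zero x) (Bg_zero x)
    (master x) (Bmaster x) n

end BG


open MvPolynomial in
open scoped Classical in
/-- The two-sided descent polynomial of the separable permutations of length `n`
is gamma-positive, with `s = X 0`, `t = X 1`, and gamma basis elements
`(st)^k (1+st)^{n-1-2k}`. -/
theorem stmt10 (n : ℕ) (hn : 1 ≤ n) :
    ∃ γ : ℕ → ℕ,
      (∑ π ∈ Finset.univ.filter (fun π : Equiv.Perm (Fin n) => SeparablePerm π),
        (X 0 : MvPolynomial (Fin 2) ℤ) ^ des π * (X 1) ^ ides π) =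
      ∑ k ∈ Finset.range ((n - 1) / 2 + 1),
        (γ k : MvPolynomial (Fin 2) ℤ) * (X 0 * X 1) ^ k *
          (1 + X 0 * X 1) ^ (n - 1 - 2 * k) := by
  refine ⟨γf n, ?_⟩
  set R := MvPolynomial (Fin 2) ℤ
  set x : R := X 0 * X 1 with hx
  have hfilter : Finset.univ.filter (fun π : Equiv.Perm (Fin n) => SeparablePerm π)
      = SepS n := by
    rw [SepS]
  have hL : (∑ π ∈ Finset.univ.filter (fun π : Equiv.Perm (Fin n) => SeparablePerm π),
      (X 0 : R) ^ des π * (X 1) ^ ides π) = Spoly x n := by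
    rw [hfilter, Spoly]
    apply Finset.sum_congr rfl
    intro π hπ
    have hsep : SeparablePerm π := by
      simp only [SepS, Finset.mem_filter, Finset.mem_univ, true_and] at hπ
      exact hπ
    rw [sep_ides_eq_des hsep, des_eq_desv, hx, mul_pow]
  rw [hL, Spoly_eq_Bg, Bg]
  have hshrink : ∑ k ∈ range n, (γf n k : R) * (x^k * (1+x)^(n-1-2*k))
      = ∑ k ∈ range ((n-1)/2 + 1), (γf n k : R) * (x^k * (1+x)^(n-1-2*k)) := by
    symm
    apply Finset.sum_subset (Finset.range_subset_range.mpr (by omega))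
    intro k hk1 hk2
    rw [Finset.mem_range] at hk1 hk2
    rw [γf_supp n k (by omega), Nat.cast_zero, zero_mul]
  rw [hshrink]
  apply Finset.sum_congr rfl
  intro k _
  rw [mul_assoc]
end
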